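/- arXiv:math/0610406 — 5 statements merged into one kernel-verified Lean document; each statement's English description precedes it below -/
import Mathlib

section
/- Let W be a group, H ≤ W a subgroup, and let s_1,…,s_r ∈ W be elements with s_i^2 = 1 for all i. Define I = { i ∈ {1,…,r} : s_i ≠ 1 and s_1 s_2 ⋯ s_{i-1} s_i s_{i-1} ⋯ s_2 s_1 ∈ H }. Fix j ∈ I and define a new sequence by s'_i = s_i for i ≠ j and s'_j = 1. Then the analogously defined index set I' for (s'_1,…,s'_r) equals I \ {j}. -/
/-- The product `s 1 * s 2 * ⋯ * s n`. -/
def wordProd {G : Type*} [Monoid G] (s : ℕ → G) : ℕ → G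
  | 0 => 1
  | n + 1 => wordProd s n * s (n + 1)

/-- The product `s n * ⋯ * s 2 * s 1`. -/
def wordProdRev {G : Type*} [Monoid G] (s : ℕ → G) : ℕ → G
  | 0 => 1
  | n + 1 => s (n + 1) * wordProdRev s n

/-- The palindromic product `s 1 ⋯ s (i-1) * s i * s (i-1) ⋯ s 1` at index `i`. -/
def pal {G : Type*} [Monoid G] (s : ℕ → G) (i : ℕ) : G :=
  wordProd s (i - 1) * s i * wordProdRev s (i - 1)

/-- The index set of the sequence `s` (of length `r`) relative to the subgroup `H`:
those `i ∈ {1, …, r}` with `s i ≠ 1` whose palindromic product lies in `H`. -/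
def idxSet {G : Type*} [Group G] (H : Subgroup G) (r : ℕ) (s : ℕ → G) : Set ℕ :=
  {i | i ∈ Set.Icc 1 r ∧ s i ≠ 1 ∧ pal s i ∈ H}

lemma wordProdRev_eq_inv {G : Type*} [Group G] (s : ℕ → G) (hs : ∀ i, s i * s i = 1) :
    ∀ n, wordProdRev s n = (wordProd s n)⁻¹ := by
  intro n
  induction n with
  | zero => simp [wordProd, wordProdRev]
  | succ n ih =>
    have h : s (n + 1) = (s (n + 1))⁻¹ := eq_inv_of_mul_eq_one_left (hs _)
    rw [wordProdRev, wordProd, ih, mul_inv_rev, ← h]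

lemma wordProd_update_lt {G : Type*} [Group G] (s : ℕ → G) (j : ℕ) :
    ∀ n, n < j → wordProd (Function.update s j 1) n = wordProd s n := by
  intro n
  induction n with
  | zero => intro _; rfl
  | succ n ih =>
    intro hn
    rw [wordProd, wordProd, ih (by omega), Function.update_of_ne (by omega)]

lemma wordProd_update_ge {G : Type*} [Group G] (s : ℕ → G) (hs : ∀ i, s i * s i = 1)
    (k : ℕ) : ∀ n, k + 1 ≤ n →
      wordProd (Function.update s (k + 1) 1) n = pal s (k + 1) * wordProd s n := by
  intro n
  induction n with
  | zero => omega
  | succ n ih =>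
    intro hn
    rcases eq_or_lt_of_le hn with h | h
    · -- n + 1 = k + 1
      have hk : n = k := by omega
      subst hk
      rw [wordProd, wordProd_update_lt s (n + 1) n (by omega),
        Function.update_self, pal, wordProdRev_eq_inv s hs]
      simp only [Nat.add_sub_cancel]
      simp [wordProd, mul_assoc, hs]
    · have hn' : k + 1 ≤ n := by omega
      rw [wordProd, wordProd, ih hn', Function.update_of_ne (by omega), mul_assoc]

/-- Lemma 5.3: replacing the letter at a position `j` of the index set by `1`
removes exactly `j` from the index set. -/
theorem idxSet_update_eq_sdiff
    {W : Type*} [Group W] (H : Subgroup W) (r : ℕ) (s : ℕ → W)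
    (hs : ∀ i, s i * s i = 1) (j : ℕ) (hj : j ∈ idxSet H r s) :
    idxSet H r (Function.update s j 1) = idxSet H r s \ {j} := by
  obtain ⟨hjr, hjne, hjH⟩ := hj
  have hj1 : 1 ≤ j := hjr.1
  obtain ⟨k, rfl⟩ : ∃ k, j = k + 1 := ⟨j - 1, by omega⟩
  set s' := Function.update s (k + 1) 1 with hs'def
  have hs' : ∀ i, s' i * s' i = 1 := by
    intro i
    rcases eq_or_ne i (k + 1) with h | h
    · simp [hs'def, h]
    · simp [hs'def, Function.update_of_ne h, hs i]
  ext i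
  simp only [idxSet, Set.mem_setOf_eq, Set.mem_diff, Set.mem_singleton_iff]
  rcases eq_or_ne i (k + 1) with rfl | hne
  · simp [hs'def]
  · have hsi : s' i = s i := Function.update_of_ne hne _ _
    rcases lt_or_gt_of_ne hne with hlt | hgt
    · -- i < k + 1
      have hpal : pal s' i = pal s i := by
        rw [pal, pal, wordProdRev_eq_inv s hs, wordProdRev_eq_inv s' hs',
          hsi, wordProd_update_lt s (k + 1) (i - 1) (by omega)]
      rw [hpal, hsi]
      tauto
    · -- i > k + 1
      set g := pal s (k + 1) with hg
      have hpal : pal s' i = g * pal s i * g⁻¹ := by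
        rw [pal, wordProdRev_eq_inv s' hs', hsi,
          wordProd_update_ge s hs k (i - 1) (by omega), ← hg, pal,
          wordProdRev_eq_inv s hs]
        group
      have hmem : pal s' i ∈ H ↔ pal s i ∈ H := by
        rw [hpal]
        constructor
        · intro h
          have h2 := H.mul_mem (H.mul_mem (H.inv_mem hjH) h) hjH
          have : g⁻¹ * (g * pal s i * g⁻¹) * g = pal s i := by group
          rwa [this] at h2
        · intro h
          exact H.mul_mem (H.mul_mem hjH h) (H.inv_mem hjH)
      rw [hsi, hmem]
      tauto
end

section
/- Let c be a linear automorphism of the ambient vector space with c(Φ) = Φ and c(Φ⁺) = Φ⁺, and let ω ∈ W be such that ω^{-1}(Ψ⁺) ⊆ Φ⁺. If the composite map ωc satisfies (ωc)(Ψ) = Ψ, then (ωc)(Ψ⁺) = Ψ⁺. -/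
open scoped BigOperators

/-- `g` is the reflection in the root `α`, with respect to the coroot assignment `c`:
`g x = x - ⟨x, α∨⟩ α` for all `x`. -/
def IsReflection {V : Type*} [AddCommGroup V] [Module ℝ V]
    (c : V → Module.Dual ℝ V) (α : V) (g : V ≃ₗ[ℝ] V) : Prop :=
  ∀ x : V, g x = x - c α x • α

/-- The subgroup of `GL(V)` generated by the reflections in the elements of `Ψ`. -/
def reflSubgroup {V : Type*} [AddCommGroup V] [Module ℝ V]
    (c : V → Module.Dual ℝ V) (Ψ : Set V) : Subgroup (V ≃ₗ[ℝ] V) :=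
  Subgroup.closure {g | ∃ α ∈ Ψ, IsReflection c α g}

/-- The number of elements `α` of `A` such that `w α` is a negative root,
i.e. `-(w α)` lies in the positive system `pos`. -/
noncomputable def invCount {V : Type*} [AddCommGroup V] [Module ℝ V]
    (pos A : Set V) (w : V ≃ₗ[ℝ] V) : ℕ :=
  Set.ncard {α | α ∈ A ∧ -(w α) ∈ pos}


/-- Lemma 5.8: if `c'` is a linear automorphism preserving `Φ` and `Φ⁺`, and `ω ∈ W`
satisfies `ω⁻¹(Ψ⁺) ⊆ Φ⁺`, then `(ω c')(Ψ) = Ψ` implies `(ω c')(Ψ⁺) = Ψ⁺`. -/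
theorem omega_c_preserves_positive_subsystem
    {V : Type*} [AddCommGroup V] [Module ℝ V]
    (Φ : Set V) (c : V → Module.Dual ℝ V) (pos Ψ : Set V)
    (hΦfin : Φ.Finite) (hΦ0 : (0 : V) ∉ Φ)
    (hc2 : ∀ α ∈ Φ, c α α = 2)
    (hΦrefl : ∀ α ∈ Φ, ∀ β ∈ Φ, β - c α β • α ∈ Φ)
    (hcrys : ∀ α ∈ Φ, ∀ β ∈ Φ, ∃ n : ℤ, c α β = (n : ℝ))
    (hposΦ : pos ⊆ Φ)
    (hpos : ∀ α ∈ Φ, (α ∈ pos ↔ -α ∉ pos))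
    (hposadd : ∀ α ∈ pos, ∀ β ∈ pos, α + β ∈ Φ → α + β ∈ pos)
    (hΨΦ : Ψ ⊆ Φ) (hΨsymm : ∀ α ∈ Ψ, -α ∈ Ψ)
    (hΨrefl : ∀ α ∈ Ψ, ∀ β ∈ Ψ, β - c α β • α ∈ Ψ)
    (c' : V ≃ₗ[ℝ] V) (hc'Φ : (⇑c') '' Φ = Φ) (hc'pos : (⇑c') '' pos = pos)
    (ω : V ≃ₗ[ℝ] V) (hω : ω ∈ reflSubgroup c Φ)
    (hωpos : (⇑ω⁻¹) '' (Ψ ∩ pos) ⊆ pos)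
    (hstab : (⇑(ω * c')) '' Ψ = Ψ) :
    (⇑(ω * c')) '' (Ψ ∩ pos) = Ψ ∩ pos := by
  set g : V ≃ₗ[ℝ] V := ω * c' with hg
  have hSfin : (Ψ ∩ pos).Finite := hΦfin.subset (fun x hx => hΨΦ hx.1)
  have hkey : (⇑g⁻¹) '' (Ψ ∩ pos) ⊆ Ψ ∩ pos := by
    rintro x ⟨y, hy, rfl⟩
    have hmul : ∀ z : V, g z = ω (c' z) := fun z => rfl
    have hinv : ∀ z : V, g⁻¹ z = c'.symm (ω.symm z) := by
      intro z
      have : g (c'.symm (ω.symm z)) = z := by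
        rw [hmul]; simp
      calc g⁻¹ z = g⁻¹ (g (c'.symm (ω.symm z))) := by rw [this]
        _ = c'.symm (ω.symm z) := by
            show g.symm (g _) = _
            exact g.symm_apply_apply _
    rw [hinv]
    constructor
    · -- membership in Ψ
      have : y ∈ (⇑g) '' Ψ := by rw [hstab]; exact hy.1
      obtain ⟨z, hz, rfl⟩ := this
      have : c'.symm (ω.symm (g z)) = z := by
        rw [hmul]; simp
      rw [this]; exact hz
    · -- membership in pos
      have h1 : ω.symm y ∈ pos := hωpos ⟨y, hy, rfl⟩
      have : ω.symm y ∈ (⇑c') '' pos := by rw [hc'pos]; exact h1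
      obtain ⟨z, hz, hze⟩ := this
      have : c'.symm (ω.symm y) = z := by rw [← hze]; simp
      rw [this]; exact hz
  have heq : (⇑g⁻¹) '' (Ψ ∩ pos) = Ψ ∩ pos := by
    apply Set.eq_of_subset_of_ncard_le hkey _ hSfin
    rw [Set.ncard_image_of_injective _ (g⁻¹ : V ≃ₗ[ℝ] V).injective]
  calc (⇑g) '' (Ψ ∩ pos) = (⇑g) '' ((⇑g⁻¹) '' (Ψ ∩ pos)) := by rw [heq]
    _ = Ψ ∩ pos := by
        rw [← Set.image_comp]
        have : ⇑g ∘ ⇑g⁻¹ = id := by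
          funext z; exact g.apply_symm_apply z
        rw [this, Set.image_id]
end

section
/- Let W' = { w ∈ W : w(Ψ) = Ψ } and W'⁰ = { w ∈ W' : w(Ψ⁺) = Ψ⁺ }. Then W_Ψ is a normal subgroup of W', the intersection W'⁰ ∩ W_Ψ is trivial, and every element w ∈ W' can be written uniquely as w = x·y with x ∈ W'⁰ and y ∈ W_Ψ; that is, W' is the semidirect product of W'⁰ and the normal subgroup W_Ψ. -/
open scoped BigOperators

section Dev

variable {V : Type*} [AddCommGroup V] [Module ℝ V]

/-- Total reflection function: the reflection in `α` when `c α α = 2`, else `1`. -/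
noncomputable def rT (c : V → Module.Dual ℝ V) (α : V) : V ≃ₗ[ℝ] V :=
  if h2 : c α α = 2 then
    { toFun := fun x => x - c α x • α
      map_add' := fun x y => by simp [add_smul]; abel
      map_smul' := fun t x => by simp [smul_sub, smul_smul]
      invFun := fun x => x - c α x • α
      left_inv := fun x => by simp [map_sub, map_smul, h2]; module
      right_inv := fun x => by simp [map_sub, map_smul, h2]; module }
  else 1

variable {c : V → Module.Dual ℝ V}

theorem rT_apply {α : V} (h2 : c α α = 2) (x : V) : rT c α x = x - c α x • α := by
  rw [rT, dif_pos h2]; rfl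

theorem isReflection_rT {α : V} (h2 : c α α = 2) : IsReflection c α (rT c α) :=
  fun x => rT_apply h2 x

theorem IsReflection.eq_rT {α : V} {g : V ≃ₗ[ℝ] V} (hg : IsReflection c α g)
    (h2 : c α α = 2) : g = rT c α :=
  LinearEquiv.ext fun x => (hg x).trans (rT_apply h2 x).symm

theorem rT_mul_self (α : V) : rT c α * rT c α = 1 := by
  by_cases h2 : c α α = 2
  · refine LinearEquiv.ext fun x => ?_
    show rT c α (rT c α x) = x
    rw [rT_apply h2, rT_apply h2, map_sub, map_smul]
    simp only [h2, smul_eq_mul]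
    module
  · rw [rT, dif_neg h2, mul_one]

theorem rT_inv (α : V) : (rT c α)⁻¹ = rT c α :=
  inv_eq_of_mul_eq_one_right (rT_mul_self α)

theorem rT_mem {S : Set V} {α : V} (hα : α ∈ S) (h2 : c α α = 2) :
    rT c α ∈ reflSubgroup c S :=
  Subgroup.subset_closure ⟨α, hα, isReflection_rT h2⟩

theorem reflSubgroup_mono {S T : Set V} (hST : S ⊆ T) :
    reflSubgroup c S ≤ reflSubgroup c T :=
  Subgroup.closure_mono (fun _ ⟨α, hα, hr⟩ => ⟨α, hST hα, hr⟩)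

/-- All the hypotheses of the main theorem, bundled. -/
structure IsRS (c : V → Module.Dual ℝ V) (Φ pos : Set V) : Prop where
  fin : Φ.Finite
  nz : (0 : V) ∉ Φ
  c2 : ∀ α ∈ Φ, c α α = 2
  rc : ∀ α ∈ Φ, ∀ β ∈ Φ, β - c α β • α ∈ Φ
  crys : ∀ α ∈ Φ, ∀ β ∈ Φ, ∃ n : ℤ, c α β = (n : ℝ)
  ceq : ∀ w ∈ reflSubgroup c Φ, ∀ α ∈ Φ, ∀ x : V, c (w α) x = c α (w⁻¹ x)
  possub : pos ⊆ Φ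
  possign : ∀ α ∈ Φ, (α ∈ pos ↔ -α ∉ pos)
  posadd : ∀ α ∈ pos, ∀ β ∈ pos, α + β ∈ Φ → α + β ∈ pos

namespace IsRS

variable {Φ pos : Set V} (h : IsRS c Φ pos)
include h

theorem neg_mem {α : V} (hα : α ∈ Φ) : -α ∈ Φ := by
  have := h.rc α hα α hα
  rwa [h.c2 α hα, show α - (2:ℝ) • α = -α by module] at this

theorem rT_apply' {α : V} (hα : α ∈ Φ) (x : V) : rT c α x = x - c α x • α :=
  rT_apply (h.c2 α hα) x

theorem rT_mem_W {α : V} (hα : α ∈ Φ) : rT c α ∈ reflSubgroup c Φ :=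
  rT_mem hα (h.c2 α hα)

theorem rT_self {α : V} (hα : α ∈ Φ) : rT c α α = -α := by
  rw [h.rT_apply' hα, h.c2 α hα]; module

omit h in theorem rT_rT {α : V} (hα : α ∈ Φ) (x : V) : rT c α (rT c α x) = x := by
  have := congrArg (fun g : V ≃ₗ[ℝ] V => g x) (rT_mul_self (c := c) α)
  simpa using this

/-- Elements of the Weyl group map `Φ` into `Φ`, two-sided version. -/
theorem stab' {w : V ≃ₗ[ℝ] V} (hw : w ∈ reflSubgroup c Φ) :
    ∀ α ∈ Φ, w α ∈ Φ ∧ w⁻¹ α ∈ Φ := by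
  induction hw using Subgroup.closure_induction with
  | mem g hg =>
    obtain ⟨β, hβ, hr⟩ := hg
    have hg' : g = rT c β := hr.eq_rT (h.c2 β hβ)
    intro α hα
    constructor
    · rw [hg', h.rT_apply' hβ]; exact h.rc β hβ α hα
    · rw [hg', rT_inv, h.rT_apply' hβ]; exact h.rc β hβ α hα
  | one => intro α hα; simpa using hα
  | mul x y hx hy hx' hy' =>
    intro α hα
    constructor
    · show x (y α) ∈ Φ
      exact (hx' _ ((hy' α hα).1)).1
    · rw [mul_inv_rev]
      show y⁻¹ (x⁻¹ α) ∈ Φ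
      exact (hy' _ ((hx' α hα).2)).2
  | inv x hx hx' =>
    intro α hα
    refine ⟨(hx' α hα).2, ?_⟩
    rw [inv_inv]
    exact (hx' α hα).1

theorem stab {w : V ≃ₗ[ℝ] V} (hw : w ∈ reflSubgroup c Φ) {α : V} (hα : α ∈ Φ) :
    w α ∈ Φ := (h.stab' hw α hα).1

theorem c_w {w : V ≃ₗ[ℝ] V} (hw : w ∈ reflSubgroup c Φ) {α : V} (hα : α ∈ Φ) (x : V) :
    c (w α) x = c α (w⁻¹ x) := h.ceq w hw α hα x

theorem c_neg {α : V} (hα : α ∈ Φ) (x : V) : c (-α) x = - c α x := by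
  have h1 : rT c α α = -α := h.rT_self hα
  have h2 := h.c_w (h.rT_mem_W hα) hα x
  rw [h1] at h2
  rw [h2, rT_inv, h.rT_apply' hα, map_sub, map_smul, h.c2 α hα]
  ring_nf

theorem conj {w : V ≃ₗ[ℝ] V} (hw : w ∈ reflSubgroup c Φ) {α : V} (hα : α ∈ Φ) :
    w * rT c α * w⁻¹ = rT c (w α) := by
  have h2 : c (w α) (w α) = 2 := h.c2 _ (h.stab hw hα)
  refine LinearEquiv.ext fun x => ?_
  show w (rT c α (w⁻¹ x)) = rT c (w α) x
  rw [h.rT_apply' hα, rT_apply h2, map_sub, map_smul, h.c_w hw hα]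
  simp only [sub_left_injective.eq_iff]
  exact w.apply_symm_apply x


/-! ### The invariant bilinear form -/

noncomputable def B (h : IsRS c Φ pos) (x y : V) : ℝ :=
  ∑ α ∈ h.fin.toFinset, c α x * c α y

theorem B_def (x y : V) : h.B x y = ∑ α ∈ h.fin.toFinset, c α x * c α y := rfl

theorem B_symm (x y : V) : h.B x y = h.B y x := by
  unfold B; exact Finset.sum_congr rfl fun α _ => mul_comm _ _

theorem B_self_nonneg (x : V) : 0 ≤ h.B x x :=
  Finset.sum_nonneg fun α _ => mul_self_nonneg _

theorem B_add_left (x y z : V) : h.B (x + y) z = h.B x z + h.B y z := by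
  unfold B; rw [← Finset.sum_add_distrib]
  exact Finset.sum_congr rfl fun α _ => by rw [map_add]; ring

theorem B_smul_left (t : ℝ) (x y : V) : h.B (t • x) y = t * h.B x y := by
  unfold B; rw [Finset.mul_sum]
  exact Finset.sum_congr rfl fun α _ => by rw [map_smul]; simp; ring

theorem B_neg_left (x y : V) : h.B (-x) y = - h.B x y := by
  have := h.B_smul_left (-1) x y; simpa using this

theorem B_sub_left (x y z : V) : h.B (x - y) z = h.B x z - h.B y z := by
  rw [sub_eq_add_neg, h.B_add_left, h.B_neg_left, sub_eq_add_neg]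

theorem B_add_right (x y z : V) : h.B x (y + z) = h.B x y + h.B x z := by
  rw [h.B_symm, h.B_add_left, h.B_symm y, h.B_symm z]

theorem B_smul_right (t : ℝ) (x y : V) : h.B x (t • y) = t * h.B x y := by
  rw [h.B_symm, h.B_smul_left, h.B_symm]

theorem B_neg_right (x y : V) : h.B x (-y) = - h.B x y := by
  rw [h.B_symm, h.B_neg_left, h.B_symm]

theorem B_sub_right (x y z : V) : h.B x (y - z) = h.B x y - h.B x z := by
  rw [h.B_symm, h.B_sub_left, h.B_symm y, h.B_symm z]

theorem B_zero_left (y : V) : h.B 0 y = 0 := by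
  have := h.B_smul_left 0 0 y; simpa using this

theorem B_inv {w : V ≃ₗ[ℝ] V} (hw : w ∈ reflSubgroup c Φ) (x y : V) :
    h.B (w x) (w y) = h.B x y := by
  unfold B
  refine Finset.sum_nbij' (fun α => w⁻¹ α) (fun α => w α) ?_ ?_ ?_ ?_ ?_
  · intro α hα
    rw [Set.Finite.mem_toFinset] at *
    exact (h.stab' hw α hα).2
  · intro α hα
    rw [Set.Finite.mem_toFinset] at *
    exact (h.stab' hw α hα).1
  · intro α _; exact w.apply_symm_apply α
  · intro α _; exact w.symm_apply_apply α
  · intro α hα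
    rw [Set.Finite.mem_toFinset] at hα
    have e1 := h.ceq w⁻¹ (inv_mem hw) α hα x
    have e2 := h.ceq w⁻¹ (inv_mem hw) α hα y
    rw [inv_inv] at e1 e2
    show c α (w x) * c α (w y) = c (w⁻¹ α) x * c (w⁻¹ α) y
    rw [e1, e2]

theorem B_self_pos {β : V} (hβ : β ∈ Φ) : 0 < h.B β β := by
  have h4 : (4:ℝ) ≤ h.B β β := by
    have : c β β * c β β ≤ h.B β β :=
      Finset.single_le_sum (f := fun α => c α β * c α β)
        (fun α _ => mul_self_nonneg _) (h.fin.mem_toFinset.2 hβ)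
    rw [h.c2 β hβ] at this; linarith
  linarith

theorem B_formula {β : V} (hβ : β ∈ Φ) (x : V) :
    h.B x β = c β x / 2 * h.B β β := by
  have hi : h.B (rT c β x) (rT c β β) = h.B x β := h.B_inv (h.rT_mem_W hβ) x β
  rw [h.rT_self hβ, h.rT_apply' hβ, h.B_sub_left, h.B_smul_left] at hi
  rw [h.B_neg_right, h.B_neg_right] at hi
  have hpos := h.B_self_pos hβ
  linarith

theorem c_eq_B {β : V} (hβ : β ∈ Φ) (x : V) :
    c β x = 2 * h.B x β / h.B β β := by
  have h0 := h.B_self_pos hβ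
  rw [h.B_formula hβ x]
  field_simp

theorem cs (x y : V) : h.B x y ^ 2 ≤ h.B x x * h.B y y := by
  have key : ∀ t : ℝ, 0 ≤ h.B y y * (t * t) + (2 * h.B x y) * t + h.B x x := by
    intro t
    have := h.B_self_nonneg (x + t • y)
    simp only [h.B_add_left, h.B_add_right, h.B_smul_left, h.B_smul_right,
      h.B_symm y x] at this
    nlinarith [this]
  have hd := discrim_le_zero key
  rw [discrim] at hd
  nlinarith [hd]

theorem rad {v : V} (hv : h.B v v = 0) {γ : V} (hγ : γ ∈ Φ) : c γ v = 0 := by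
  have : ∀ α ∈ h.fin.toFinset, c α v * c α v = 0 := by
    rw [← Finset.sum_eq_zero_iff_of_nonneg (fun α _ => mul_self_nonneg _)]
    exact hv
  have := this γ (h.fin.mem_toFinset.2 hγ)
  nlinarith [this]

theorem c_int {α β : V} (hα : α ∈ Φ) (hβ : β ∈ Φ) : ∃ n : ℤ, c α β = (n : ℝ) :=
  h.crys α hα β hβ


/-! ### Root subtraction lemma -/

theorem sub_mem {α β : V} (hα : α ∈ Φ) (hβ : β ∈ Φ) (hc : 1 ≤ c α β) (hne : β ≠ α) :
    β - α ∈ Φ := by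
  obtain ⟨na, ha⟩ := h.c_int hα hβ
  obtain ⟨nb, hb⟩ := h.c_int hβ hα
  have hBαα := h.B_self_pos hα
  have hBββ := h.B_self_pos hβ
  have e1 : h.B β α = c α β / 2 * h.B α α := h.B_formula hα β
  have e2 : h.B α β = c β α / 2 * h.B β β := h.B_formula hβ α
  have hBsym : h.B α β = h.B β α := h.B_symm α β
  have k1 : c α β * h.B α α = 2 * h.B β α := by rw [e1]; ring
  have k2 : c β α * h.B β β = 2 * h.B β α := by rw [← hBsym, e2]; ring
  have hBpos : 0 < h.B β α := by nlinarith
  have hbpos : 0 < c β α := by nlinarith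
  have hcs := h.cs α β
  rw [hBsym] at hcs
  have hprod : c α β * c β α ≤ 4 := by nlinarith [mul_pos hBαα hBββ]
  have hna : 1 ≤ na := by
    have : (0:ℝ) < na := by rw [← ha]; linarith
    exact_mod_cast this
  have hnb : 1 ≤ nb := by
    have : (0:ℝ) < nb := by rw [← hb]; linarith
    exact_mod_cast this
  have hnab : na * nb ≤ 4 := by
    have : ((na * nb : ℤ) : ℝ) ≤ 4 := by push_cast; rw [← ha, ← hb]; exact hprod
    exact_mod_cast this
  by_cases hna1 : na = 1
  · have := h.rc α hα β hβ
    rwa [ha, hna1, Int.cast_one, one_smul] at this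
  by_cases hnb1 : nb = 1
  · have := h.rc β hβ α hα
    rw [hb, hnb1, Int.cast_one, one_smul] at this
    have := h.neg_mem this
    rwa [neg_sub] at this
  -- now na = nb = 2
  have h2a : 2 ≤ na := by omega
  have h2b : 2 ≤ nb := by omega
  have hmul1 : na * 2 ≤ na * nb := by
    apply mul_le_mul_of_nonneg_left h2b; omega
  have hmul2 : 2 * nb ≤ na * nb := by
    apply mul_le_mul_of_nonneg_right h2a; omega
  have hna2 : na = 2 := by omega
  have hnb2 : nb = 2 := by omega
  have ha2 : c α β = 2 := by rw [ha, hna2]; norm_num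
  have hb2 : c β α = 2 := by rw [hb, hnb2]; norm_num
  rw [ha2] at k1; rw [hb2] at k2
  have hu : h.B (α - β) (α - β) = 0 := by
    rw [h.B_sub_left, h.B_sub_right, h.B_sub_right, hBsym]
    linarith
  have hcu : ∀ γ ∈ Φ, c γ (α - β) = 0 := fun γ hγ => h.rad hu hγ
  set g := rT c β * rT c α with hg
  have hgW : g ∈ reflSubgroup c Φ := mul_mem (h.rT_mem_W hβ) (h.rT_mem_W hα)
  have hgu : g (α - β) = α - β := by
    show rT c β (rT c α (α - β)) = α - β
    rw [h.rT_apply' hα, hcu α hα, zero_smul, sub_zero, h.rT_apply' hβ, hcu β hβ,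
      zero_smul, sub_zero]
  have hgβ : g β = β - (2:ℝ) • (α - β) := by
    show rT c β (rT c α β) = β - (2:ℝ) • (α - β)
    rw [h.rT_apply' hα β, ha2, h.rT_apply' hβ, map_sub, map_smul, h.c2 β hβ, hb2]
    simp only [smul_eq_mul]
    module
  have hgku : ∀ k : ℕ, (g ^ k) (α - β) = α - β := by
    intro k
    induction k with
    | zero => simp
    | succ n ih => rw [pow_succ]; show (g ^ n) (g (α - β)) = _; rw [hgu, ih]
  have key : ∀ k : ℕ, (g ^ k) β = β - ((2 * k : ℝ)) • (α - β) := by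
    intro k
    induction k with
    | zero => simp
    | succ n ih =>
      rw [pow_succ']
      show g ((g ^ n) β) = _
      rw [ih, map_sub, map_smul, hgβ, hgu]
      push_cast
      module
  have hu0 : α - β = 0 := by
    by_contra hu0
    have hinj : Function.Injective (fun k : ℕ => β - ((2 * k : ℝ)) • (α - β)) := by
      intro k l e
      simp only [sub_right_injective.eq_iff] at e
      have : ((2 * k : ℝ) - (2 * l : ℝ)) • (α - β) = 0 := by
        rw [sub_smul, e, sub_self]
      rcases smul_eq_zero.1 this with hc0 | hc0
      · have : (k : ℝ) = l := by linarith [hc0, sub_eq_zero.1 (by linarith : (2*(k:ℝ)) - 2*l = 0)]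
        exact_mod_cast this
      · exact absurd hc0 hu0
    have : Set.Infinite Φ :=
      Set.infinite_of_injective_forall_mem hinj
        (fun k => by rw [← key k]; exact h.stab (pow_mem hgW k) hβ)
    exact this h.fin
  exact absurd (sub_eq_zero.1 hu0).symm hne

/-! ### No zero sums of positive roots -/

theorem B_multiset_sum_left (S : Multiset V) (z : V) :
    h.B S.sum z = (S.map (fun x => h.B x z)).sum := by
  induction S using Multiset.induction with
  | empty => simpa using h.B_zero_left z
  | cons a S ih => rw [Multiset.sum_cons, h.B_add_left, ih, Multiset.map_cons, Multiset.sum_cons]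

theorem no_zero_sum : ∀ (S : Multiset V), (∀ x ∈ S, x ∈ pos) → S ≠ 0 → S.sum ≠ 0 := by
  classical
  suffices H : ∀ n (S : Multiset V), Multiset.card S = n → (∀ x ∈ S, x ∈ pos) → S ≠ 0 →
      S.sum ≠ 0 by
    intro S hS h0
    exact H _ S rfl hS h0
  intro n
  induction n using Nat.strong_induction_on with
  | _ n IH =>
    intro S hcard hS h0 hsum
    obtain ⟨x, hx⟩ := Multiset.exists_mem_of_ne_zero h0
    have hxp := hS x hx
    have hxΦ := h.possub hxp
    set T := S.erase x with hT
    have hST : x ::ₘ T = S := Multiset.cons_erase hx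
    have hsumT : x + T.sum = 0 := by rw [← hsum, ← hST, Multiset.sum_cons]
    have hBx : h.B x T.sum < 0 := by
      have : h.B x (x + T.sum) = 0 := by rw [hsumT]; rw [h.B_symm]; exact h.B_zero_left x
      rw [h.B_add_right] at this
      have := h.B_self_pos hxΦ
      linarith
    have hex : ∃ y ∈ T, h.B x y < 0 := by
      by_contra hno
      push_neg at hno
      have : 0 ≤ (T.map (fun y => h.B x y)).sum :=
        Multiset.sum_nonneg (by
          intro a ha
          obtain ⟨y, hy, rfl⟩ := Multiset.mem_map.1 ha
          exact hno y hy)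
      rw [h.B_symm, h.B_multiset_sum_left] at hBx
      have : (T.map (fun y => h.B y x)).sum = (T.map (fun y => h.B x y)).sum := by
        congr 1
        exact Multiset.map_congr rfl fun y _ => h.B_symm y x
      linarith [hBx, this]
    obtain ⟨y, hyT, hBxy⟩ := hex
    have hyp := hS y (Multiset.mem_of_mem_erase hyT)
    have hyΦ := h.possub hyp
    have hyne : -y ≠ x := by
      intro e
      have hny : -y ∉ pos := (h.possign y hyΦ).1 hyp
      rw [e] at hny
      exact hny hxp
    have hcxy : c x (-y) ≥ 1 := by
      obtain ⟨n', hn'⟩ := h.c_int hxΦ hyΦ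
      have hlt : c x y < 0 := by
        have hf : h.B y x = c x y / 2 * h.B x x := h.B_formula hxΦ y
        have hxx := h.B_self_pos hxΦ
        have hs : h.B y x = h.B x y := h.B_symm y x
        nlinarith
      have hn1 : n' ≤ -1 := by
        have : (n' : ℝ) < 0 := by rw [← hn']; exact hlt
        have : n' < 0 := by exact_mod_cast this
        omega
      rw [map_neg, hn']
      have : (n' : ℝ) ≤ -1 := by exact_mod_cast hn1
      linarith
    have hsub := h.sub_mem hxΦ (h.neg_mem hyΦ) hcxy hyne
    have hxy : x + y ∈ Φ := by
      have := h.neg_mem hsub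
      rwa [neg_sub, sub_neg_eq_add] at this
    have hxyp : x + y ∈ pos := h.posadd x hxp y hyp hxy
    have hxyne : x + y ≠ 0 := by
      intro e
      exact hyne (by linear_combination (norm := abel) -e)
    set S' := (x + y) ::ₘ (T.erase y) with hS'
    have hTS : y ::ₘ T.erase y = T := Multiset.cons_erase hyT
    have hcard' : Multiset.card S' = n - 1 := by
      rw [hS', Multiset.card_cons]
      have c1 : Multiset.card T = n - 1 := by
        rw [hT, Multiset.card_erase_of_mem hx, hcard]; rfl
      have c2 : Multiset.card (T.erase y) = Multiset.card T - 1 :=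
        Multiset.card_erase_of_mem hyT
      have hn2 : 2 ≤ n := by
        have : Multiset.card (y ::ₘ T.erase y) = Multiset.card T := by rw [hTS]
        rw [Multiset.card_cons] at this
        omega
      omega
    have hlt : n - 1 < n := by
      have : Multiset.card S ≠ 0 := by
        intro e; exact h0 (Multiset.card_eq_zero.1 e)
      omega
    refine IH (n-1) hlt S' hcard' ?_ ?_ ?_
    · intro z hz
      rcases Multiset.mem_cons.1 hz with rfl | hz'
      · exact hxyp
      · exact hS z (Multiset.mem_of_mem_erase (hTS ▸ Multiset.mem_cons_of_mem hz'))
    · exact Multiset.cons_ne_zero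
    · rw [hS', Multiset.sum_cons]
      have : y + (T.erase y).sum = T.sum := by rw [← Multiset.sum_cons, hTS]
      have goal : x + y + (T.erase y).sum = 0 := by
        rw [add_assoc, this, hsumT]
      exact goal


theorem neg_mem_pos {α : V} (hα : α ∈ Φ) (hnp : α ∉ pos) : -α ∈ pos := by
  have := h.possign (-α) (h.neg_mem hα)
  rw [neg_neg] at this
  exact this.2 hnp

theorem multiset_sum_mem {S : Multiset V} (hS : ∀ x ∈ S, x ∈ pos) (h0 : S ≠ 0)
    (hΦs : S.sum ∈ Φ) : S.sum ∈ pos := by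
  by_contra hn
  have hneg : -S.sum ∈ pos := by
    by_contra hnn
    exact hn ((h.possign _ hΦs).2 hnn)
  have := h.no_zero_sum ((-S.sum) ::ₘ S) ?_ (Multiset.cons_ne_zero)
  · rw [Multiset.sum_cons] at this
    simp at this
  · intro z hz
    rcases Multiset.mem_cons.1 hz with rfl | hz'
    · exact hneg
    · exact hS z hz'

theorem nsmul_cast_smul (k : ℕ) (v : V) : (Multiset.replicate k v).sum = (k : ℝ) • v := by
  rw [Multiset.sum_replicate]
  exact (Nat.cast_smul_eq_nsmul ℝ k v).symm

theorem smul_mem_pos {α : V} (hα : α ∈ pos) {t : ℝ} (ht : 0 < t) (htm : t • α ∈ Φ) :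
    t • α ∈ pos := by
  have hαΦ := h.possub hα
  obtain ⟨n, hn⟩ := h.c_int hαΦ htm
  have hn2t : c α (t • α) = 2 * t := by rw [map_smul, h.c2 α hαΦ]; simp; ring
  have hnt : (n : ℝ) = 2 * t := by rw [← hn, hn2t]
  have hn1 : 1 ≤ n := by
    have : (0:ℝ) < n := by rw [hnt]; linarith
    exact_mod_cast this
  by_contra hnp
  have hneg : -(t • α) ∈ pos := h.neg_mem_pos htm hnp
  set S : Multiset V := Multiset.replicate 2 (-(t • α)) + Multiset.replicate n.toNat α with hSdef
  have hsum : S.sum = 0 := by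
    rw [hSdef, Multiset.sum_add, h.nsmul_cast_smul, h.nsmul_cast_smul]
    have : ((n.toNat : ℝ)) = 2 * t := by
      rw [← hnt]; congr 1; exact_mod_cast Int.toNat_of_nonneg (by omega)
    rw [this]
    push_cast
    module
  refine h.no_zero_sum S ?_ ?_ hsum
  · intro z hz
    rw [hSdef, Multiset.mem_add] at hz
    rcases hz with hz | hz
    · rw [Multiset.eq_of_mem_replicate hz]; exact hneg
    · rw [Multiset.eq_of_mem_replicate hz]; exact hα
  · rw [hSdef]
    intro e
    have : Multiset.card (Multiset.replicate 2 (-(t • α)) + Multiset.replicate n.toNat α) = 0 := by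
      rw [e]; rfl
    simp at this

/-! ### Simple roots -/

def simples (h : IsRS c Φ pos) : Set V :=
  {δ | δ ∈ pos ∧ ¬∃ a, a ∈ pos ∧ ∃ b, b ∈ pos ∧ δ = a + b}

theorem simples_subset : h.simples ⊆ pos := fun _ hδ => hδ.1

theorem simple_step {δ α : V} (hδ : δ ∈ h.simples) (hα : α ∈ pos) (hc : 1 ≤ c δ α)
    (hne : α ≠ δ) : α - δ ∈ pos := by
  have hδΦ := h.possub hδ.1
  have hαΦ := h.possub hα
  have hsub : α - δ ∈ Φ := h.sub_mem hδΦ hαΦ hc hne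
  by_contra hn
  have : -(α - δ) ∈ pos := h.neg_mem_pos hsub hn
  rw [neg_sub] at this
  exact hδ.2 ⟨α, hα, δ - α, this, by abel⟩

theorem chain {δ α : V} (hδ : δ ∈ h.simples) (hα : α ∈ pos)
    (hspan : ∀ t : ℝ, α ≠ t • δ) :
    ∀ j : ℕ, 2 * (j : ℝ) ≤ c δ α + 1 → α - (j : ℝ) • δ ∈ pos := by
  intro j
  induction j with
  | zero => intro _; simpa using hα
  | succ k ih =>
    intro hj
    push_cast at hj
    have hk : α - (k : ℝ) • δ ∈ pos := ih (by push_cast; linarith)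
    have hcδ : c δ (α - (k:ℝ) • δ) = c δ α - 2 * k := by
      rw [map_sub, map_smul, h.c2 δ (h.possub hδ.1)]; simp; ring
    have h1 : 1 ≤ c δ (α - (k:ℝ) • δ) := by rw [hcδ]; linarith
    have hne : α - (k:ℝ) • δ ≠ δ := by
      intro e
      exact hspan ((k:ℝ)+1) ((sub_eq_iff_eq_add.mp e).trans (by module))
    have := h.simple_step hδ hk h1 hne
    have he : α - (k:ℝ) • δ - δ = α - ((k:ℝ)+1) • δ := by module
    rw [he] at this
    convert this using 2
    push_cast
    ring

/-- Key lemma: a simple reflection permutes the positive roots not proportional to it. -/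
theorem simple_perm {δ α : V} (hδ : δ ∈ h.simples) (hα : α ∈ pos)
    (hspan : ∀ t : ℝ, α ≠ t • δ) : rT c δ α ∈ pos := by
  have hδΦ := h.possub hδ.1
  have hαΦ := h.possub hα
  obtain ⟨n, hn⟩ := h.c_int hδΦ hαΦ
  have hrtΦ : rT c δ α ∈ Φ := by rw [h.rT_apply' hδΦ]; exact h.rc δ hδΦ α hαΦ
  by_cases hn0 : n ≤ 0
  · rcases eq_or_lt_of_le hn0 with rfl | hlt
    · rw [h.rT_apply' hδΦ, hn]
      simpa using hα
    · -- c δ α < 0 : rT δ α = α + (-n) δ is a positive sum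
      set S : Multiset V := α ::ₘ Multiset.replicate (-n).toNat δ with hSdef
      have hsum : S.sum = rT c δ α := by
        rw [hSdef, Multiset.sum_cons, h.nsmul_cast_smul, h.rT_apply' hδΦ, hn]
        have : (((-n).toNat : ℝ)) = -(n:ℝ) := by
          exact_mod_cast Int.toNat_of_nonneg (by omega)
        rw [this]
        module
      have := h.multiset_sum_mem (S := S) ?_ (Multiset.cons_ne_zero) (by rw [hsum]; exact hrtΦ)
      · rwa [hsum] at this
      · intro z hz
        rcases Multiset.mem_cons.1 hz with rfl | hz'
        · exact hα
        · rw [Multiset.eq_of_mem_replicate hz']; exact hδ.1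
  · push_neg at hn0
    by_contra hnpos
    have hγΦ : -(rT c δ α) ∈ Φ := h.neg_mem hrtΦ
    have hβ : -(rT c δ α) ∈ pos := h.neg_mem_pos hrtΦ hnpos
    set β := -(rT c δ α) with hβdef
    have hβeq : β = (n : ℝ) • δ - α := by
      rw [hβdef, h.rT_apply' hδΦ, hn]; abel
    have hβspan : ∀ t : ℝ, β ≠ t • δ := by
      intro t e
      refine hspan ((n:ℝ) - t) ?_
      rw [hβeq] at e
      rw [sub_smul, ← e]
      abel
    have hcβ : c δ β = (n : ℝ) := by
      rw [hβeq, map_sub, map_smul, h.c2 δ hδΦ, hn]; simp; ring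
    set j1 : ℕ := (n.toNat + 1) / 2 with hj1
    set j2 : ℕ := n.toNat / 2 with hj2
    have hα2 : α - (j2 : ℝ) • δ ∈ pos := by
      refine h.chain hδ hα hspan j2 ?_
      rw [hn]
      have : (j2 : ℝ) * 2 ≤ n := by
        have : 2 * j2 ≤ n.toNat := by omega
        have := (Nat.cast_le (α := ℝ)).2 this
        push_cast at this
        have hnn : ((n.toNat : ℝ)) = (n : ℝ) := by exact_mod_cast Int.toNat_of_nonneg (by omega)
        linarith [this, hnn.le]
      linarith
    have hβ2 : β - (j1 : ℝ) • δ ∈ pos := by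
      refine h.chain hδ hβ hβspan j1 ?_
      rw [hcβ]
      have h1 : 2 * j1 ≤ n.toNat + 1 := by omega
      have := (Nat.cast_le (α := ℝ)).2 h1
      push_cast at this
      have hnn : ((n.toNat : ℝ)) = (n : ℝ) := by exact_mod_cast Int.toNat_of_nonneg (by omega)
      linarith
    have hkey : β - (j1 : ℝ) • δ = -(α - (j2 : ℝ) • δ) := by
      rw [hβeq]
      have hj12 : (j1 : ℝ) + j2 = n := by
        have : j1 + j2 = n.toNat := by omega
        have := congrArg (fun m : ℕ => (m : ℝ)) this
        push_cast at this
        have hnn : ((n.toNat : ℝ)) = (n : ℝ) := by exact_mod_cast Int.toNat_of_nonneg (by omega)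
        linarith
      have : ((n:ℝ)) • δ = ((j1:ℝ)) • δ + ((j2:ℝ)) • δ := by
        rw [← add_smul, hj12]
      rw [this]
      abel
    rw [hkey] at hβ2
    have hx := hα2
    have hxΦ := h.possub hx
    exact ((h.possign _ hxΦ).1 hx) hβ2

/-- Reflections in proportional roots coincide. -/
theorem rT_smul {β δ : V} (hβ : β ∈ Φ) (hδ : δ ∈ Φ) {t : ℝ} (ht : β = t • δ) :
    rT c β = rT c δ := by
  have ht0 : t ≠ 0 := by
    intro e
    rw [e, zero_smul] at ht
    exact h.nz (ht ▸ hβ)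
  have hBδδ := h.B_self_pos hδ
  refine LinearEquiv.ext fun x => ?_
  rw [h.rT_apply' hβ, h.rT_apply' hδ]
  have hcβ : c β x = c δ x / t := by
    have e1 : c β x = 2 * h.B x β / h.B β β := h.c_eq_B hβ x
    have e2 : c δ x = 2 * h.B x δ / h.B δ δ := h.c_eq_B hδ x
    rw [e1, e2, ht, h.B_smul_right, h.B_smul_left, h.B_smul_right]
    field_simp
  rw [hcβ, ht, smul_smul, div_mul_cancel₀ _ ht0]


theorem rT_pos_of_nonpos {β α : V} (hβ : β ∈ pos) (hα : α ∈ pos) (hc : c β α ≤ 0) :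
    rT c β α ∈ pos := by
  have hβΦ := h.possub hβ
  have hαΦ := h.possub hα
  have hrtΦ : rT c β α ∈ Φ := by rw [h.rT_apply' hβΦ]; exact h.rc β hβΦ α hαΦ
  obtain ⟨n, hn⟩ := h.c_int hβΦ hαΦ
  have hn0 : n ≤ 0 := by
    have : (n : ℝ) ≤ 0 := by rw [← hn]; exact hc
    exact_mod_cast this
  rcases eq_or_lt_of_le hn0 with rfl | hlt
  · rw [h.rT_apply' hβΦ, hn]
    simpa using hα
  · set S : Multiset V := α ::ₘ Multiset.replicate (-n).toNat β with hSdef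
    have hsum : S.sum = rT c β α := by
      rw [hSdef, Multiset.sum_cons, h.nsmul_cast_smul, h.rT_apply' hβΦ, hn]
      have : (((-n).toNat : ℝ)) = -(n:ℝ) := by
        exact_mod_cast Int.toNat_of_nonneg (by omega)
      rw [this]
      module
    have := h.multiset_sum_mem (S := S) ?_ (Multiset.cons_ne_zero) (by rw [hsum]; exact hrtΦ)
    · rwa [hsum] at this
    · intro z hz
      rcases Multiset.mem_cons.1 hz with rfl | hz'
      · exact hα
      · rw [Multiset.eq_of_mem_replicate hz']; exact hβ

/-! ### The sum of positive roots -/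

noncomputable def posF (h : IsRS c Φ pos) : Finset V := (h.fin.subset h.possub).toFinset

theorem mem_posF {α : V} : α ∈ h.posF ↔ α ∈ pos := Set.Finite.mem_toFinset _

noncomputable def sigma (h : IsRS c Φ pos) : V := ∑ α ∈ h.posF, α

theorem c_sigma_pos {β : V} (hβ : β ∈ pos) : 0 < c β h.sigma := by
  classical
  have hβΦ := h.possub hβ
  have hβ0 : β ≠ 0 := fun e => h.nz (e ▸ hβΦ)
  have hsum : c β h.sigma = ∑ α ∈ h.posF, c β α := map_sum (c β) _ _
  set p : V → Prop := fun α => α ≠ β ∧ rT c β α ∈ pos with hp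
  have hsplit := Finset.sum_filter_add_sum_filter_not h.posF p (fun α => c β α)
  have hS1 : ∑ α ∈ h.posF.filter p, c β α = 0 := by
    refine Finset.sum_involution (fun a _ => rT c β a) ?_ ?_ ?_ ?_
    · intro a _
      show c β a + c β (rT c β a) = 0
      rw [h.rT_apply' hβΦ, map_sub, map_smul, h.c2 β hβΦ]
      simp only [smul_eq_mul]
      ring
    · intro a _ hfa e
      apply hfa
      replace e : rT c β a = a := e
      rw [h.rT_apply' hβΦ] at e
      have hz : c β a • β = 0 := by
        have : c β a • β = a - (a - c β a • β) := by abel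
        rw [e] at this
        simpa using this
      rcases smul_eq_zero.1 hz with h1 | h1
      · exact h1
      · exact absurd h1 hβ0
    · intro a ha
      rw [Finset.mem_filter] at ha ⊢
      obtain ⟨haF, hane, harT⟩ := ha
      have haΦ := h.possub (h.mem_posF.1 haF)
      refine ⟨h.mem_posF.2 harT, ?_, ?_⟩
      · intro e
        replace e : rT c β a = β := e
        have : a = -β := by
          have h2 := rT_rT (c := c) hβΦ a
          rw [e, h.rT_self hβΦ] at h2
          exact h2.symm
        have hap := h.mem_posF.1 haF
        rw [this] at hap
        exact (h.possign β hβΦ).1 hβ hap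
      · show rT c β (rT c β a) ∈ pos
        rw [rT_rT (c := c) hβΦ]
        exact h.mem_posF.1 haF
    · intro a _
      exact rT_rT (c := c) hβΦ a
  have hS2 : (1:ℝ) ≤ ∑ α ∈ h.posF.filter (fun α => ¬ p α), c β α := by
    have hterms : ∀ a ∈ h.posF.filter (fun α => ¬ p α), (1:ℝ) ≤ c β a := by
      intro a ha
      rw [Finset.mem_filter] at ha
      obtain ⟨haF, hnp⟩ := ha
      have hap := h.mem_posF.1 haF
      by_cases hab : a = β
      · rw [hab, h.c2 β hβΦ]; norm_num
      · have hrtn : rT c β a ∉ pos := by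
          intro hrt
          exact hnp ⟨hab, hrt⟩
        by_contra hlt
        push_neg at hlt
        obtain ⟨n, hn⟩ := h.c_int hβΦ (h.possub hap)
        have : c β a ≤ 0 := by
          have : (n:ℝ) < 1 := by rw [← hn]; exact hlt
          have : n ≤ 0 := by exact_mod_cast Int.lt_add_one_iff.mp (by exact_mod_cast this)
          rw [hn]
          exact_mod_cast this
        exact hrtn (h.rT_pos_of_nonpos hβ hap this)
    have hβmem : β ∈ h.posF.filter (fun α => ¬ p α) := by
      rw [Finset.mem_filter]
      exact ⟨h.mem_posF.2 hβ, fun hc => hc.1 rfl⟩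
    calc (1:ℝ) = 1 • (1:ℝ) := by norm_num
    _ ≤ (h.posF.filter (fun α => ¬ p α)).card • (1:ℝ) := by
        have : 1 ≤ (h.posF.filter (fun α => ¬ p α)).card := Finset.card_pos.2 ⟨β, hβmem⟩
        exact nsmul_le_nsmul_left (by norm_num) this
    _ ≤ _ := Finset.card_nsmul_le_sum _ _ _ hterms
  rw [hsum, ← hsplit, hS1, zero_add]
  linarith

theorem B_sigma_pos {β : V} (hβ : β ∈ pos) : 0 < h.B h.sigma β := by
  have hβΦ := h.possub hβ
  rw [h.B_formula hβΦ]
  have := h.c_sigma_pos hβ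
  have := h.B_self_pos hβΦ
  nlinarith

/-- Measure for induction on positive roots. -/
noncomputable def mu (h : IsRS c Φ pos) (α : V) : ℕ :=
  (h.posF.filter (fun γ => h.B h.sigma γ < h.B h.sigma α)).card

theorem mu_lt {a b : V} (ha : a ∈ pos) (hlt : h.B h.sigma a < h.B h.sigma b) :
    h.mu a < h.mu b := by
  classical
  apply Finset.card_lt_card
  constructor
  · intro γ hγ
    rw [Finset.mem_filter] at hγ ⊢
    exact ⟨hγ.1, lt_trans hγ.2 hlt⟩
  · intro hsub
    have : a ∈ h.posF.filter (fun γ => h.B h.sigma γ < h.B h.sigma a) :=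
      hsub (by rw [Finset.mem_filter]; exact ⟨h.mem_posF.2 ha, hlt⟩)
    rw [Finset.mem_filter] at this
    exact lt_irrefl _ this.2

theorem expand {α : V} (hα : α ∈ pos) :
    ∃ S : Multiset V, (∀ x ∈ S, x ∈ h.simples) ∧ S ≠ 0 ∧ S.sum = α := by
  suffices H : ∀ (n : ℕ) (α : V), α ∈ pos → h.mu α = n →
      ∃ S : Multiset V, (∀ x ∈ S, x ∈ h.simples) ∧ S ≠ 0 ∧ S.sum = α from
    H _ α hα rfl
  intro n
  induction n using Nat.strong_induction_on with
  | _ n IH =>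
    intro α hα hmu
    by_cases hs : α ∈ h.simples
    · exact ⟨{α}, by simpa using hs, by simp, by simp⟩
    · have : ∃ a, a ∈ pos ∧ ∃ b, b ∈ pos ∧ α = a + b := by
        by_contra hno
        exact hs ⟨hα, hno⟩
      obtain ⟨a, hap, b, hbp, rfl⟩ := this
      have hBa : h.B h.sigma a < h.B h.sigma (a + b) := by
        rw [h.B_add_right]
        have := h.B_sigma_pos hbp
        linarith
      have hBb : h.B h.sigma b < h.B h.sigma (a + b) := by
        rw [h.B_add_right]
        have := h.B_sigma_pos hap
        linarith
      obtain ⟨Sa, hSa1, _, hSa3⟩ := IH (h.mu a) (hmu ▸ h.mu_lt hap hBa) a hap rfl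
      obtain ⟨Sb, hSb1, hSb2, hSb3⟩ := IH (h.mu b) (hmu ▸ h.mu_lt hbp hBb) b hbp rfl
      refine ⟨Sa + Sb, ?_, ?_, ?_⟩
      · intro x hx
        rcases Multiset.mem_add.1 hx with hx | hx
        · exact hSa1 x hx
        · exact hSb1 x hx
      · intro e
        apply hSb2
        have hc := congrArg Multiset.card e
        simp only [Multiset.card_add, Multiset.card_zero] at hc
        exact Multiset.card_eq_zero.1 (by omega)
      · rw [Multiset.sum_add, hSa3, hSb3]

theorem exists_simple_pos {β : V} (hβ : β ∈ pos) : ∃ δ ∈ h.simples, 1 ≤ c δ β := by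
  obtain ⟨S, hS1, hS2, hS3⟩ := h.expand hβ
  have hβΦ := h.possub hβ
  have hBpos : 0 < h.B β β := h.B_self_pos hβΦ
  have hsum : h.B β β = (S.map (fun x => h.B x β)).sum := by
    have h0 := h.B_multiset_sum_left S β
    rw [hS3] at h0
    exact h0
  have hex : ∃ x ∈ S, 0 < h.B x β := by
    by_contra hno
    push_neg at hno
    have hfold : ∀ M : Multiset ℝ, (∀ a ∈ M, a ≤ 0) → M.sum ≤ 0 := by
      intro M
      induction M using Multiset.induction with
      | empty => simp
      | cons a M ih =>
        intro hM
        rw [Multiset.sum_cons]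
        have h1 := hM a (Multiset.mem_cons_self a M)
        have h2 := ih (fun b hb => hM b (Multiset.mem_cons_of_mem hb))
        linarith
    have : (S.map (fun x => h.B x β)).sum ≤ 0 := by
      apply hfold
      intro a ha
      obtain ⟨y, hy, rfl⟩ := Multiset.mem_map.1 ha
      exact hno y hy
    linarith
  obtain ⟨δ, hδS, hBδ⟩ := hex
  have hδ := hS1 δ hδS
  have hδΦ := h.possub hδ.1
  refine ⟨δ, hδ, ?_⟩
  obtain ⟨n, hn⟩ := h.c_int hδΦ hβΦ
  have hc : 0 < c δ β := by
    have := h.c_eq_B hδΦ β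
    have hBs : h.B β δ = h.B δ β := h.B_symm β δ
    have := h.B_self_pos hδΦ
    rw [h.c_eq_B hδΦ β, hBs]
    positivity
  have : 1 ≤ n := by
    have : (0:ℝ) < n := by rw [← hn]; exact hc
    exact_mod_cast this
  rw [hn]
  exact_mod_cast this

theorem rT_mem_simple {β : V} (hβ : β ∈ pos) :
    rT c β ∈ reflSubgroup c h.simples := by
  suffices H : ∀ (n : ℕ) (β : V), β ∈ pos → h.mu β = n →
      rT c β ∈ reflSubgroup c h.simples from H _ β hβ rfl
  intro n
  induction n using Nat.strong_induction_on with
  | _ n IH =>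
    intro β hβ hmu
    have hβΦ := h.possub hβ
    by_cases hβs : β ∈ h.simples
    · exact rT_mem hβs (h.c2 β hβΦ)
    obtain ⟨δ, hδ, hcδ⟩ := h.exists_simple_pos hβ
    have hδΦ := h.possub hδ.1
    have hδmem : rT c δ ∈ reflSubgroup c h.simples := rT_mem hδ (h.c2 δ hδΦ)
    by_cases hsp : ∃ t : ℝ, β = t • δ
    · obtain ⟨t, ht⟩ := hsp
      rw [h.rT_smul hβΦ hδΦ ht]
      exact hδmem
    · push_neg at hsp
      set γ := rT c δ β with hγdef
      have hγpos : γ ∈ pos := h.simple_perm hδ hβ hsp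
      have hγΦ := h.possub hγpos
      have hBγ : h.B h.sigma γ < h.B h.sigma β := by
        rw [hγdef, h.rT_apply' hδΦ, h.B_sub_right, h.B_smul_right]
        have h1 := h.B_sigma_pos hδ.1
        nlinarith
      have hIH : rT c γ ∈ reflSubgroup c h.simples :=
        IH (h.mu γ) (hmu ▸ h.mu_lt hγpos hBγ) γ hγpos rfl
      have hββ : rT c δ γ = β := rT_rT (c := c) hδΦ β
      have hconj := h.conj (h.rT_mem_W hδΦ) hγΦ
      rw [hββ] at hconj
      rw [← hconj]
      exact mul_mem (mul_mem hδmem hIH) (inv_mem hδmem)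

theorem le_simple : reflSubgroup c Φ ≤ reflSubgroup c h.simples := by
  rw [reflSubgroup]
  refine (Subgroup.closure_le _).2 ?_
  rintro g ⟨β, hβ, hr⟩
  have hg : g = rT c β := hr.eq_rT (h.c2 β hβ)
  rw [hg]
  by_cases hβp : β ∈ pos
  · exact h.rT_mem_simple hβp
  · have hnβ : -β ∈ pos := h.neg_mem_pos hβ hβp
    have : rT c β = rT c (-β) :=
      h.rT_smul hβ (h.neg_mem hβ) (t := -1) (by module)
    rw [this]
    exact h.rT_mem_simple hnβ


end IsRS

/-! ### Words in reflections -/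

noncomputable def prodR (c : V → Module.Dual ℝ V) (L : List V) : V ≃ₗ[ℝ] V :=
  (L.map (rT c)).prod

theorem prodR_nil : prodR c ([] : List V) = 1 := rfl

theorem prodR_cons (a : V) (L : List V) : prodR c (a :: L) = rT c a * prodR c L := by
  simp [prodR]

theorem prodR_append (A B : List V) : prodR c (A ++ B) = prodR c A * prodR c B := by
  simp [prodR]

theorem prodR_singleton (a : V) : prodR c [a] = rT c a := by
  simp [prodR]

namespace IsRS

variable {Φ pos : Set V} (h : IsRS c Φ pos)
include h

theorem prodR_mem {S : Set V} (hSΦ : S ⊆ Φ) :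
    ∀ (L : List V), (∀ δ ∈ L, δ ∈ S) → prodR c L ∈ reflSubgroup c S := by
  intro L
  induction L with
  | nil => intro _; rw [prodR_nil]; exact one_mem _
  | cons a L ih =>
    intro hL
    rw [prodR_cons]
    exact mul_mem (rT_mem (hL a List.mem_cons_self) (h.c2 a (hSΦ (hL a List.mem_cons_self))))
      (ih (fun δ hδ => hL δ (List.mem_cons_of_mem a hδ)))

omit h in theorem cross : ∀ (M : List V) (γ : V), γ ∈ pos → prodR c M γ ∉ pos →
    ∃ A B d, M = A ++ d :: B ∧ prodR c B γ ∈ pos ∧ rT c d (prodR c B γ) ∉ pos := by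
  intro M
  induction M with
  | nil =>
    intro γ hγ hn
    rw [prodR_nil] at hn
    exact absurd hγ hn
  | cons d M ih =>
    intro γ hγ hn
    by_cases hM : prodR c M γ ∈ pos
    · refine ⟨[], M, d, rfl, hM, ?_⟩
      rw [prodR_cons] at hn
      exact hn
    · obtain ⟨A, B, d', hM', h1, h2⟩ := ih γ hγ hM
      exact ⟨d :: A, B, d', by rw [hM']; rfl, h1, h2⟩

theorem del : ∀ (n : ℕ) (L : List V), L.length = n → (∀ δ ∈ L, δ ∈ h.simples) →
    (∀ α ∈ pos, prodR c L α ∈ pos) → prodR c L = 1 := by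
  intro n
  induction n using Nat.strong_induction_on with
  | _ n IH =>
    intro L hlen hL hfix
    rcases List.eq_nil_or_concat L with rfl | ⟨M, δ, rfl⟩
    · rfl
    have hconcat : M.concat δ = M ++ [δ] := List.concat_eq_append
    have hδmem : δ ∈ M.concat δ := by simp
    have hδ : δ ∈ h.simples := hL δ hδmem
    have hδp : δ ∈ pos := hδ.1
    have hδΦ : δ ∈ Φ := h.possub hδp
    have hM : ∀ d ∈ M, d ∈ h.simples := fun d hd => hL d (by simp [hd])
    have hMΦ : ∀ d ∈ M, d ∈ Φ := fun d hd => h.possub (hM d hd).1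
    have hsplit : prodR c (M.concat δ) = prodR c M * rT c δ := by
      rw [hconcat, prodR_append, prodR_singleton]
    have hwδ : prodR c (M.concat δ) δ ∈ pos := hfix δ hδp
    have hMδ : prodR c M δ ∉ pos := by
      intro hMp
      have he : prodR c (M.concat δ) δ = -(prodR c M δ) := by
        rw [hsplit]
        show prodR c M (rT c δ δ) = _
        rw [h.rT_self hδΦ, map_neg]
      have hMΦ' : prodR c M δ ∈ Φ := h.possub hMp
      have := (h.possign _ hMΦ').1 hMp
      rw [← he] at this
      exact this hwδ
    obtain ⟨A, B, d, hMeq, hγpos, hγneg⟩ := cross M δ hδp hMδ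
    have hdM : d ∈ M := by rw [hMeq]; simp
    have hd : d ∈ h.simples := hM d hdM
    have hdΦ : d ∈ Φ := h.possub hd.1
    set γ := prodR c B δ with hγdef
    have hγΦ : γ ∈ Φ := h.possub hγpos
    have hspan : ∃ t : ℝ, γ = t • d := by
      by_contra hno
      push_neg at hno
      exact hγneg (h.simple_perm hd hγpos hno)
    obtain ⟨t, ht⟩ := hspan
    have hrT : rT c γ = rT c d := h.rT_smul hγΦ hdΦ ht
    have hBmem : ∀ x ∈ B, x ∈ h.simples := by
      intro x hx
      apply hM
      rw [hMeq]
      simp [hx]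
    have hBW : prodR c B ∈ reflSubgroup c Φ := by
      have := h.prodR_mem (le_refl Φ) B (fun x hx => h.possub (hBmem x hx).1)
      exact this
    have hconj := h.conj hBW hδΦ
    have hswap : rT c d * prodR c B = prodR c B * rT c δ := by
      rw [← hrT, hγdef, ← hconj]
      group
    have e1 : prodR c (M.concat δ) = prodR c A * (rT c d * prodR c B) * rT c δ := by
      rw [hconcat, hMeq, prodR_append, prodR_append, prodR_cons, prodR_singleton]
    have hprod_eq : prodR c (M.concat δ) = prodR c (A ++ B) := by
      rw [e1, hswap, prodR_append, mul_assoc (prodR c A), mul_assoc (prodR c B),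
        rT_mul_self, mul_one]
    have hlenAB : (A ++ B).length < n := by
      have l1 : (M.concat δ).length = M.length + 1 := by simp
      have l2 : M.length = A.length + B.length + 1 := by rw [hMeq]; simp; omega
      have l3 : (A ++ B).length = A.length + B.length := by simp
      omega
    have hABs : ∀ x ∈ A ++ B, x ∈ h.simples := by
      intro x hx
      rcases List.mem_append.1 hx with hx | hx
      · exact hM x (by rw [hMeq]; simp [hx])
      · exact hBmem x hx
    have := IH _ hlenAB (A ++ B) rfl hABs (by rw [← hprod_eq]; exact hfix)
    rw [hprod_eq, this]

theorem word_of_mem {w : V ≃ₗ[ℝ] V} (hw : w ∈ reflSubgroup c h.simples) :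
    ∃ L : List V, (∀ δ ∈ L, δ ∈ h.simples) ∧ prodR c L = w := by
  have hmem : w ∈ Submonoid.closure ({g | ∃ α ∈ h.simples, IsReflection c α g} ∪
      {g | ∃ α ∈ h.simples, IsReflection c α g}⁻¹) := by
    rw [← Subgroup.closure_toSubmonoid]
    exact hw
  obtain ⟨l, hl, hlprod⟩ := Submonoid.exists_list_of_mem_closure hmem
  have hl' : ∀ g ∈ l, ∃ δ ∈ h.simples, g = rT c δ := by
    intro g hg
    rcases hl g hg with hg' | hg'
    · obtain ⟨δ, hδ, hr⟩ := hg'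
      exact ⟨δ, hδ, hr.eq_rT (h.c2 δ (h.possub hδ.1))⟩
    · rw [Set.mem_inv] at hg'
      obtain ⟨δ, hδ, hr⟩ := hg'
      have : g⁻¹ = rT c δ := hr.eq_rT (h.c2 δ (h.possub hδ.1))
      exact ⟨δ, hδ, by rw [← inv_inv g, this, rT_inv]⟩
  clear hl hmem hw
  subst hlprod
  induction l with
  | nil => exact ⟨[], by simp, rfl⟩
  | cons g l ih =>
    obtain ⟨L', hL', hL'p⟩ := ih (fun g' hg' => hl' g' (List.mem_cons_of_mem g hg'))
    obtain ⟨δ, hδ, rfl⟩ := hl' g List.mem_cons_self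
    refine ⟨δ :: L', ?_, ?_⟩
    · intro x hx
      rcases List.mem_cons.1 hx with rfl | hx
      · exact hδ
      · exact hL' x hx
    · rw [prodR_cons, hL'p, List.prod_cons]

/-- The main engine: an element of `W` preserving the positive system is the identity. -/
theorem eq_one_of_fix {w : V ≃ₗ[ℝ] V} (hw : w ∈ reflSubgroup c Φ)
    (hfix : ∀ α ∈ pos, w α ∈ pos) : w = 1 := by
  obtain ⟨L, hL, hLp⟩ := h.word_of_mem (h.le_simple hw)
  rw [← hLp]
  exact h.del L.length L rfl hL (by rw [hLp]; exact hfix)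


theorem image_eq {w : V ≃ₗ[ℝ] V} (hw : w ∈ reflSubgroup c Φ) : (⇑w) '' Φ = Φ := by
  ext α
  constructor
  · rintro ⟨β, hβ, rfl⟩
    exact h.stab hw hβ
  · intro hα
    exact ⟨w⁻¹ α, (h.stab' hw α hα).2, w.apply_symm_apply α⟩

omit h in theorem restrict (h : IsRS c Φ pos) {Ψ : Set V} (hΨΦ : Ψ ⊆ Φ) (hsym : ∀ α ∈ Ψ, -α ∈ Ψ)
    (href : ∀ α ∈ Ψ, ∀ β ∈ Ψ, β - c α β • α ∈ Ψ) : IsRS c Ψ (Ψ ∩ pos) where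
  fin := h.fin.subset hΨΦ
  nz h0 := h.nz (hΨΦ h0)
  c2 α hα := h.c2 α (hΨΦ hα)
  rc := href
  crys α hα β hβ := h.crys α (hΨΦ hα) β (hΨΦ hβ)
  ceq w hw α hα x := h.ceq w (reflSubgroup_mono hΨΦ hw) α (hΨΦ hα) x
  possub := Set.inter_subset_left
  possign := by
    intro α hα
    constructor
    · rintro ⟨-, hαp⟩ ⟨-, hnp⟩
      exact (h.possign α (hΨΦ hα)).1 hαp hnp
    · intro hno
      refine ⟨hα, ?_⟩
      by_contra hnp
      exact hno ⟨hsym α hα, h.neg_mem_pos (hΨΦ hα) hnp⟩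
  posadd α hα β hβ hs := ⟨hs, h.posadd α hα.2 β hβ.2 (hΨΦ hs)⟩

end IsRS

theorem image_inv_eq {f : V ≃ₗ[ℝ] V} {S : Set V} (hf : (⇑f) '' S = S) :
    (⇑f⁻¹) '' S = S := by
  conv_lhs => rw [← hf]
  rw [← Set.image_comp]
  have : (⇑f⁻¹ ∘ ⇑f) = id := funext fun x => f.symm_apply_apply x
  rw [this, Set.image_id]

theorem image_mul_eq (f g : V ≃ₗ[ℝ] V) (S : Set V) :
    (⇑(f * g)) '' S = (⇑f) '' ((⇑g) '' S) := by
  rw [← Set.image_comp]; rfl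

end Dev


/-- 5.7: let `W' = {w ∈ W : w(Ψ) = Ψ}` and `W'⁰ = {w ∈ W' : w(Ψ⁺) = Ψ⁺}`. Then
`W_Ψ ⊆ W'`, `W_Ψ` is normal in `W'`, `W'⁰ ∩ W_Ψ = {1}`, and every `w ∈ W'` factors
uniquely as `w = x * y` with `x ∈ W'⁰` and `y ∈ W_Ψ`. -/
theorem semidirect_decomposition_of_stabilizer
    {V : Type*} [AddCommGroup V] [Module ℝ V]
    (Φ : Set V) (c : V → Module.Dual ℝ V) (pos Ψ : Set V)
    (hΦfin : Φ.Finite) (hΦ0 : (0 : V) ∉ Φ)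
    (hc2 : ∀ α ∈ Φ, c α α = 2)
    (hΦrefl : ∀ α ∈ Φ, ∀ β ∈ Φ, β - c α β • α ∈ Φ)
    (hcrys : ∀ α ∈ Φ, ∀ β ∈ Φ, ∃ n : ℤ, c α β = (n : ℝ))
    -- equivariance of the coroot assignment under the Weyl group of `Φ`
    (hceq : ∀ w ∈ reflSubgroup c Φ, ∀ α ∈ Φ, ∀ x : V, c (w α) x = c α (w⁻¹ x))
    (hposΦ : pos ⊆ Φ)
    (hpos : ∀ α ∈ Φ, (α ∈ pos ↔ -α ∉ pos))
    (hposadd : ∀ α ∈ pos, ∀ β ∈ pos, α + β ∈ Φ → α + β ∈ pos)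
    (hΨΦ : Ψ ⊆ Φ) (hΨsymm : ∀ α ∈ Ψ, -α ∈ Ψ)
    (hΨrefl : ∀ α ∈ Ψ, ∀ β ∈ Ψ, β - c α β • α ∈ Ψ) :
    -- `W_Ψ ⊆ W'`
    (∀ x ∈ reflSubgroup c Ψ, x ∈ reflSubgroup c Φ ∧ (⇑x) '' Ψ = Ψ) ∧
    -- `W_Ψ` is normal in `W'`
    (∀ w, w ∈ reflSubgroup c Φ → (⇑w) '' Ψ = Ψ →
      ∀ x ∈ reflSubgroup c Ψ, w * x * w⁻¹ ∈ reflSubgroup c Ψ) ∧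
    -- `W'⁰ ∩ W_Ψ` is trivial
    (∀ w, w ∈ reflSubgroup c Φ → (⇑w) '' Ψ = Ψ → (⇑w) '' (Ψ ∩ pos) = Ψ ∩ pos →
      w ∈ reflSubgroup c Ψ → w = 1) ∧
    -- unique factorization `w = x * y`, `x ∈ W'⁰`, `y ∈ W_Ψ`
    (∀ w, w ∈ reflSubgroup c Φ → (⇑w) '' Ψ = Ψ →
      ∃! p : (V ≃ₗ[ℝ] V) × (V ≃ₗ[ℝ] V),
        (p.1 ∈ reflSubgroup c Φ ∧ (⇑p.1) '' Ψ = Ψ ∧ (⇑p.1) '' (Ψ ∩ pos) = Ψ ∩ pos) ∧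
        p.2 ∈ reflSubgroup c Ψ ∧ w = p.1 * p.2) := by
  classical
  have h : IsRS c Φ pos := ⟨hΦfin, hΦ0, hc2, hΦrefl, hcrys, hceq, hposΦ, hpos, hposadd⟩
  have hP : IsRS c Ψ (Ψ ∩ pos) := h.restrict hΨΦ hΨsymm hΨrefl
  set P := Ψ ∩ pos with hPdef
  have hPF : P.Finite := hP.fin.subset hP.possub
  refine ⟨?_, ?_, ?_, ?_⟩
  · -- part 1
    intro x hx
    exact ⟨reflSubgroup_mono hΨΦ hx, hP.image_eq hx⟩
  · -- part 2 : normality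
    intro w hw hwΨ x hx
    induction hx using Subgroup.closure_induction with
    | mem g hg =>
      obtain ⟨β, hβ, hr⟩ := hg
      have hβΦ := hΨΦ hβ
      have hg' : g = rT c β := hr.eq_rT (h.c2 β hβΦ)
      rw [hg', h.conj hw hβΦ]
      have hwβ : w β ∈ Ψ := by rw [← hwΨ]; exact ⟨β, hβ, rfl⟩
      exact rT_mem hwβ (h.c2 _ (hΨΦ hwβ))
    | one => simpa using one_mem _
    | mul a b _ _ iha ihb =>
      have he : w * (a * b) * w⁻¹ = (w * a * w⁻¹) * (w * b * w⁻¹) := by group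
      rw [he]; exact mul_mem iha ihb
    | inv a _ iha =>
      have he : w * a⁻¹ * w⁻¹ = (w * a * w⁻¹)⁻¹ := by group
      rw [he]; exact inv_mem iha
  · -- part 3 : trivial intersection
    intro w _ _ hwP hwmem
    refine hP.eq_one_of_fix hwmem ?_
    intro α hα
    rw [← hwP]
    exact ⟨α, hα, rfl⟩
  · -- part 4 : unique factorization
    intro w hw hwΨ
    have Hex : ∀ (n : ℕ) (w : V ≃ₗ[ℝ] V), w ∈ reflSubgroup c Φ → (⇑w) '' Ψ = Ψ →
        (hPF.toFinset.filter (fun α => w α ∉ pos)).card = n →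
        ∃ y ∈ reflSubgroup c Ψ, ∀ α ∈ P, (w * y) α ∈ P := by
      intro n
      induction n using Nat.strong_induction_on with
      | _ n IH =>
        intro w hw hwΨ hcard
        by_cases h0 : n = 0
        · refine ⟨1, one_mem _, ?_⟩
          intro α hα
          have hαΨ : w α ∈ Ψ := by rw [← hwΨ]; exact ⟨α, hα.1, rfl⟩
          have hαp : w α ∈ pos := by
            by_contra hn
            have hmemf : α ∈ hPF.toFinset.filter (fun α => w α ∉ pos) :=
              Finset.mem_filter.2 ⟨hPF.mem_toFinset.2 hα, hn⟩
            have hemp := Finset.card_eq_zero.1 (by rw [hcard, h0])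
            rw [hemp] at hmemf
            simp at hmemf
          have : (w * 1) α = w α := by rw [mul_one]
          rw [this]
          exact ⟨hαΨ, hαp⟩
        · have hex : ∃ δ ∈ hP.simples, w δ ∉ pos := by
            by_contra hno
            push_neg at hno
            have hall : ∀ α ∈ P, w α ∈ pos := by
              intro α hα
              obtain ⟨S, hS1, hS2, hS3⟩ := hP.expand hα
              have hsum : w α = (S.map ⇑w).sum := by
                rw [← hS3]; exact map_multiset_sum w S
              have hin : (S.map ⇑w).sum ∈ pos := by
                apply h.multiset_sum_mem
                · intro z hz
                  obtain ⟨y, hy, rfl⟩ := Multiset.mem_map.1 hz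
                  exact hno y (hS1 y hy)
                · intro e
                  exact hS2 (Multiset.map_eq_zero.1 e)
                · rw [← hsum]
                  exact h.stab hw (hΨΦ hα.1)
              rwa [hsum]
            have hne : (hPF.toFinset.filter (fun α => w α ∉ pos)).Nonempty := by
              rw [← Finset.card_pos, hcard]
              omega
            obtain ⟨α, hαf⟩ := hne
            rw [Finset.mem_filter] at hαf
            exact hαf.2 (hall α (hPF.mem_toFinset.1 hαf.1))
          obtain ⟨δ, hδ, hwδ⟩ := hex
          have hδP : δ ∈ P := hδ.1
          have hδΨ : δ ∈ Ψ := hδP.1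
          have hδΦ : δ ∈ Φ := hΨΦ hδΨ
          have hδpos : δ ∈ pos := hδP.2
          set w' := w * rT c δ with hw'def
          have hw'W : w' ∈ reflSubgroup c Φ := mul_mem hw (h.rT_mem_W hδΦ)
          have hrδmem : rT c δ ∈ reflSubgroup c Ψ := rT_mem hδΨ (h.c2 δ hδΦ)
          have hrδΨ : (⇑(rT c δ)) '' Ψ = Ψ := hP.image_eq hrδmem
          have hw'Ψ : (⇑w') '' Ψ = Ψ := by
            rw [hw'def, image_mul_eq, hrδΨ, hwΨ]
          -- cardinality decrease
          have hwδΦ : w δ ∈ Φ := h.stab hw hδΦ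
          have hnwδ : -(w δ) ∈ pos := h.neg_mem_pos hwδΦ hwδ
          have himg : ∀ α ∈ hPF.toFinset.filter (fun α => w' α ∉ pos),
              rT c δ α ∈ hPF.toFinset.filter (fun α => w α ∉ pos) := by
            intro α hαf
            rw [Finset.mem_filter] at hαf
            obtain ⟨hαF, hαn⟩ := hαf
            have hαP : α ∈ P := hPF.mem_toFinset.1 hαF
            have hαΦ : α ∈ Φ := hΨΦ hαP.1
            have hw'α : w' α = w (rT c δ α) := rfl
            by_cases hsp : ∃ t : ℝ, α = t • δ
            · exfalso
              obtain ⟨t, ht⟩ := hsp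
              have ht0 : t ≠ 0 := by
                intro e
                rw [e, zero_smul] at ht
                exact h.nz (ht ▸ hαΦ)
              have htpos : 0 < t := by
                rcases lt_or_gt_of_ne ht0 with hlt | hgt
                · exfalso
                  have hms : (-t) • δ ∈ Φ := by
                    rw [show (-t) • δ = -α by rw [ht]; module]
                    exact h.neg_mem hαΦ
                  have := h.smul_mem_pos hδpos (t := -t) (by linarith) hms
                  rw [show (-t) • δ = -α by rw [ht]; module] at this
                  exact (h.possign α hαΦ).1 hαP.2 this
                · exact hgt
              apply hαn
              have hcδα : c δ α = 2 * t := by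
                rw [ht, map_smul, h.c2 δ hδΦ]; simp; ring
              have hrδα : rT c δ α = -α := by
                rw [h.rT_apply' hδΦ, hcδα, ht]; module
              rw [hw'α, hrδα, map_neg]
              have hsm : t • (-(w δ)) ∈ Φ := by
                rw [show t • (-(w δ)) = -(w α) by rw [ht, map_smul]; module]
                exact h.neg_mem (h.stab hw hαΦ)
              have := h.smul_mem_pos hnwδ htpos hsm
              rwa [show t • (-(w δ)) = -(w α) by rw [ht, map_smul]; module] at this
            · push_neg at hsp
              have hrP : rT c δ α ∈ P := hP.simple_perm hδ hαP hsp
              rw [Finset.mem_filter]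
              refine ⟨hPF.mem_toFinset.2 hrP, ?_⟩
              rw [← hw'α]
              exact hαn
          have hδin : δ ∈ hPF.toFinset.filter (fun α => w α ∉ pos) :=
            Finset.mem_filter.2 ⟨hPF.mem_toFinset.2 hδP, hwδ⟩
          have hδnotin : δ ∉ (hPF.toFinset.filter (fun α => w' α ∉ pos)).image (rT c δ) := by
            intro hmem
            obtain ⟨α, hαf, hαe⟩ := Finset.mem_image.1 hmem
            rw [Finset.mem_filter] at hαf
            have hαP : α ∈ P := hPF.mem_toFinset.1 hαf.1
            have : α = -δ := by
              have := IsRS.rT_rT (c := c) hδΦ α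
              rw [hαe, h.rT_self hδΦ] at this
              exact this.symm
            rw [this] at hαP
            exact (h.possign δ hδΦ).1 hδpos hαP.2
          have hcard' : (hPF.toFinset.filter (fun α => w' α ∉ pos)).card < n := by
            rw [← hcard]
            calc (hPF.toFinset.filter (fun α => w' α ∉ pos)).card
                = ((hPF.toFinset.filter (fun α => w' α ∉ pos)).image (rT c δ)).card :=
                  (Finset.card_image_of_injective _ (EquivLike.injective (rT c δ))).symm
            _ < (hPF.toFinset.filter (fun α => w α ∉ pos)).card := by
                apply Finset.card_lt_card
                constructor
                · intro γ hγ
                  obtain ⟨α, hαf, rfl⟩ := Finset.mem_image.1 hγ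
                  exact himg α hαf
                · intro hsub
                  exact hδnotin (hsub hδin)
          obtain ⟨y', hy'mem, hy'fix⟩ := IH _ hcard' w' hw'W hw'Ψ rfl
          refine ⟨rT c δ * y', mul_mem hrδmem hy'mem, ?_⟩
          intro α hα
          have he : w * (rT c δ * y') = w' * y' := by rw [hw'def, mul_assoc]
          rw [he]
          exact hy'fix α hα
    obtain ⟨y, hymem, hyfix⟩ := Hex _ w hw hwΨ rfl
    set x := w * y with hxdef
    have hymemΦ := reflSubgroup_mono hΨΦ hymem
    have hyΨ : (⇑y) '' Ψ = Ψ := hP.image_eq hymem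
    have hxW : x ∈ reflSubgroup c Φ := mul_mem hw hymemΦ
    have hxΨ : (⇑x) '' Ψ = Ψ := by rw [hxdef, image_mul_eq, hyΨ, hwΨ]
    have hxP : (⇑x) '' P = P := by
      apply Set.eq_of_subset_of_ncard_le
      · rintro _ ⟨α, hα, rfl⟩
        exact hyfix α hα
      · rw [Set.ncard_image_of_injective P (EquivLike.injective x)]
      · exact hPF
    refine ⟨(x, y⁻¹), ⟨⟨hxW, hxΨ, hxP⟩, inv_mem hymem, by rw [hxdef]; group⟩, ?_⟩
    rintro ⟨x₂, y₂⟩ ⟨⟨hx₂W, hx₂Ψ, hx₂P⟩, hy₂mem, hweq⟩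
    have hweq' : x * y⁻¹ = x₂ * y₂ := by
      rw [← hweq, hxdef]; group
    have hkey : x⁻¹ * x₂ = y⁻¹ * y₂⁻¹ := by
      calc x⁻¹ * x₂ = x⁻¹ * (x₂ * y₂) * y₂⁻¹ := by group
      _ = x⁻¹ * (x * y⁻¹) * y₂⁻¹ := by rw [← hweq']
      _ = y⁻¹ * y₂⁻¹ := by group
    have humem : x⁻¹ * x₂ ∈ reflSubgroup c Ψ := by
      rw [hkey]
      exact mul_mem (inv_mem hymem) (inv_mem hy₂mem)
    have huP : ∀ α ∈ P, (x⁻¹ * x₂) α ∈ P := by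
      have hxinvP : (⇑x⁻¹) '' P = P := image_inv_eq hxP
      have himgP : (⇑(x⁻¹ * x₂)) '' P = P := by
        rw [image_mul_eq, hx₂P, hxinvP]
      intro α hα
      rw [← himgP]
      exact ⟨α, hα, rfl⟩
    have hu1 : x⁻¹ * x₂ = 1 := hP.eq_one_of_fix humem huP
    have hx2 : x₂ = x := (inv_mul_eq_one.1 hu1).symm
    have hy2 : y₂ = y⁻¹ := by
      rw [hx2] at hkey
      have : y⁻¹ * y₂⁻¹ = 1 := by rw [← hkey]; group
      have h2 := inv_mul_eq_one.1 this
      rw [h2, inv_inv]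
    rw [Prod.mk.injEq]
    exact ⟨hx2, hy2⟩
end

section
/- Let (W,S) be a finite Coxeter system with longest element w₀, and let σ be an automorphism of W with σ(S) = S. Let I', I'' ⊆ S and assume that the union of the σ-orbits of the elements of I' is all of S (i.e. every s ∈ S equals σⁿ(s') for some n ≥ 0 and s' ∈ I'). Then the set { a ∈ W : σ(a) = a, l(s a) < l(a) for all s ∈ I', and l(a s) < l(a) for all s ∈ I'' } is exactly {w₀}. -/
namespace Aux618

open CoxeterSystem List

variable {B W : Type*} [Group W] [DecidableEq W] {M : CoxeterMatrix B} (cs : CoxeterSystem M W)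

lemma conj_simple_eq_simple_iff (i : B) (t : W) :
    cs.simple i * t * cs.simple i = cs.simple i ↔ t = cs.simple i := by
  constructor
  · intro h
    have := congrArg (fun z => cs.simple i * z * cs.simple i) h
    simpa [mul_assoc, cs.simple_mul_simple_cancel_left, cs.simple_mul_simple_self] using this
  · rintro rfl
    simp [mul_assoc, cs.simple_mul_simple_cancel_left]

/-- The permutation of `W × ℤˣ` associated to a simple reflection. -/
def fperm (i : B) : Equiv.Perm (W × ℤˣ) :=
  Function.Involutive.toPerm
    (fun p => (cs.simple i * p.1 * cs.simple i, if p.1 = cs.simple i then -p.2 else p.2))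
    (by
      rintro ⟨t, ε⟩
      have hfst : cs.simple i * (cs.simple i * t * cs.simple i) * cs.simple i = t := by
        simp [mul_assoc, cs.simple_mul_simple_cancel_left, cs.simple_mul_simple_self]
      by_cases h : t = cs.simple i
      · subst h
        simp [mul_assoc, cs.simple_mul_simple_cancel_left, cs.simple_mul_simple_self]
      · have h1 : ¬ (cs.simple i * t * cs.simple i = cs.simple i) := fun hc =>
          h ((conj_simple_eq_simple_iff cs i t).mp hc)
        simp only [if_neg h, if_neg h1, hfst])

@[simp] lemma fperm_apply (i : B) (p : W × ℤˣ) :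
    fperm cs i p = (cs.simple i * p.1 * cs.simple i, if p.1 = cs.simple i then -p.2 else p.2) :=
  rfl

lemma simple_mul_x (i i' : B) :
    cs.simple i * (cs.simple i * cs.simple i') = (cs.simple i * cs.simple i')⁻¹ * cs.simple i := by
  rw [mul_inv_rev, cs.inv_simple, cs.inv_simple, cs.simple_mul_simple_cancel_left,
    cs.simple_mul_simple_cancel_right]

lemma simple_mul_pow (i i' : B) (n : ℕ) :
    cs.simple i * (cs.simple i * cs.simple i') ^ n
      = ((cs.simple i * cs.simple i')⁻¹) ^ n * cs.simple i := by
  induction n with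
  | zero => simp
  | succ n ih =>
    rw [pow_succ', ← mul_assoc, simple_mul_x, mul_assoc, ih, ← mul_assoc, ← pow_succ']

lemma simple'_eq (i i' : B) :
    cs.simple i' = ((cs.simple i * cs.simple i')⁻¹) ^ 1 * cs.simple i := by
  rw [pow_one, mul_inv_rev, cs.inv_simple, cs.inv_simple, mul_assoc,
    cs.simple_mul_simple_self, mul_one]

lemma conj_eq_iff (x z t : W) (k : ℕ) :
    x ^ k * t * (x⁻¹) ^ k = z ↔ t = (x⁻¹) ^ k * z * x ^ k := by
  constructor
  · intro h; rw [← h]; group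
  · intro h; rw [h]; group

lemma conj_cond (i i' : B) (k m : ℕ) (t : W) :
    (cs.simple i * cs.simple i') ^ k * t * ((cs.simple i * cs.simple i')⁻¹) ^ k
        = ((cs.simple i * cs.simple i')⁻¹) ^ m * cs.simple i
      ↔ t = ((cs.simple i * cs.simple i')⁻¹) ^ (m + 2 * k) * cs.simple i := by
  rw [conj_eq_iff]
  have hkey : ((cs.simple i * cs.simple i')⁻¹) ^ k
        * (((cs.simple i * cs.simple i')⁻¹) ^ m * cs.simple i)
        * (cs.simple i * cs.simple i') ^ k
      = ((cs.simple i * cs.simple i')⁻¹) ^ (m + 2 * k) * cs.simple i := by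
    rw [← mul_assoc, ← pow_add, mul_assoc, simple_mul_pow, ← mul_assoc, ← pow_add,
      show k + m + k = m + 2 * k from by omega]
  rw [hkey]

lemma fperm_pow (i i' : B) (k : ℕ) (t : W) (ε : ℤˣ) :
    ((fperm cs i * fperm cs i') ^ k) (t, ε) =
      ((cs.simple i * cs.simple i') ^ k * t * ((cs.simple i * cs.simple i')⁻¹) ^ k,
        ε * ∏ j ∈ Finset.range (2 * k),
          (if t = ((cs.simple i * cs.simple i')⁻¹) ^ (j + 1) * cs.simple i
            then (-1 : ℤˣ) else 1)) := by
  induction k with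
  | zero => simp
  | succ k ih =>
    rw [pow_succ', Equiv.Perm.mul_apply, ih, Equiv.Perm.mul_apply, fperm_apply, fperm_apply]
    dsimp only
    have hgen : ∀ u : W, (u = cs.simple i')
        ↔ (u = ((cs.simple i * cs.simple i')⁻¹) ^ 1 * cs.simple i) := fun u => by
      rw [← simple'_eq cs i i']
    have hc1 : ((cs.simple i * cs.simple i') ^ k * t * ((cs.simple i * cs.simple i')⁻¹) ^ k
          = cs.simple i')
        ↔ t = ((cs.simple i * cs.simple i')⁻¹) ^ (2 * k + 1) * cs.simple i := by
      rw [hgen, conj_cond cs i i' k 1 t,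
        show 1 + 2 * k = 2 * k + 1 from by omega]
    have hc2 : (cs.simple i' * ((cs.simple i * cs.simple i') ^ k * t
            * ((cs.simple i * cs.simple i')⁻¹) ^ k) * cs.simple i' = cs.simple i)
        ↔ t = ((cs.simple i * cs.simple i')⁻¹) ^ (2 * k + 2) * cs.simple i := by
      have h0 : ∀ u : W, (cs.simple i' * u * cs.simple i' = cs.simple i)
          ↔ u = cs.simple i' * cs.simple i * cs.simple i' := by
        intro u
        constructor
        · intro h; rw [← h]
          simp [mul_assoc, cs.simple_mul_simple_cancel_left, cs.simple_mul_simple_self]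
        · intro h; rw [h]
          simp [mul_assoc, cs.simple_mul_simple_cancel_left, cs.simple_mul_simple_self]
      have h1 : cs.simple i' * cs.simple i * cs.simple i'
          = ((cs.simple i * cs.simple i')⁻¹) ^ 2 * cs.simple i := by
        rw [mul_inv_rev, cs.inv_simple, cs.inv_simple, pow_two]
        simp [mul_assoc, cs.simple_mul_simple_cancel_left, cs.simple_mul_simple_self]
      rw [h0, h1, conj_cond cs i i' k 2 t, show 2 + 2 * k = 2 * k + 2 from by omega]
    have hfst : cs.simple i * (cs.simple i' * ((cs.simple i * cs.simple i') ^ k * t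
            * ((cs.simple i * cs.simple i')⁻¹) ^ k) * cs.simple i') * cs.simple i
        = (cs.simple i * cs.simple i') ^ (k + 1) * t
            * ((cs.simple i * cs.simple i')⁻¹) ^ (k + 1) := by
      rw [pow_succ' (cs.simple i * cs.simple i') k,
        pow_succ ((cs.simple i * cs.simple i')⁻¹) k, mul_inv_rev, cs.inv_simple,
        cs.inv_simple]
      simp [mul_assoc]
    rw [show 2 * (k + 1) = 2 * k + 1 + 1 from by ring, Finset.prod_range_succ,
      Finset.prod_range_succ]
    rw [Prod.mk.injEq]
    refine ⟨hfst, ?_⟩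
    simp only [hc1, hc2]
    split_ifs <;> simp [mul_comm, mul_left_comm, mul_assoc]

lemma fperm_liftable : M.IsLiftable (fun i => fperm cs i) := by
  intro i i'
  apply Equiv.ext
  rintro ⟨t, ε⟩
  rw [Equiv.Perm.one_apply, fperm_pow]
  have hxm : (cs.simple i * cs.simple i') ^ (M i i') = 1 := cs.simple_mul_simple_pow i i'
  have hxm' : ((cs.simple i * cs.simple i')⁻¹) ^ (M i i') = 1 := by
    rw [inv_pow, hxm, inv_one]
  rw [Prod.mk.injEq]
  constructor
  · simp [hxm, hxm']
  · show ε * _ = ε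
    rw [two_mul, Finset.prod_range_add]
    have hcongr : ∀ j ∈ Finset.range (M i i'),
        (if t = ((cs.simple i * cs.simple i')⁻¹) ^ (M i i' + j + 1) * cs.simple i
          then (-1 : ℤˣ) else 1)
        = (if t = ((cs.simple i * cs.simple i')⁻¹) ^ (j + 1) * cs.simple i
          then (-1 : ℤˣ) else 1) := by
      intro j _
      have : ((cs.simple i * cs.simple i')⁻¹) ^ (M i i' + j + 1)
          = ((cs.simple i * cs.simple i')⁻¹) ^ (j + 1) := by
        rw [show M i i' + j + 1 = M i i' + (j + 1) by ring, pow_add, hxm', one_mul]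
      rw [this]
    rw [Finset.prod_congr rfl hcongr, Int.units_mul_self, mul_one]

/-- The sign representation on `W × ℤˣ`. -/
def phi : W →* Equiv.Perm (W × ℤˣ) := cs.lift ⟨fun i => fperm cs i, fperm_liftable cs⟩

@[simp] lemma phi_simple (i : B) : phi cs (cs.simple i) = fperm cs i :=
  cs.lift_apply_simple (fperm_liftable cs) i

/-- `eta cs w t = -1` iff `t` is a right inversion of `w` (for reflections `t`). -/
def eta (w t : W) : ℤˣ := (phi cs w (t, 1)).2

lemma phi_apply (w : W) : ∀ (t : W) (ε : ℤˣ),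
    phi cs w (t, ε) = (w * t * w⁻¹, ε * eta cs w t) := by
  induction w using cs.simple_induction_left with
  | one =>
    intro t ε
    simp [eta, map_one]
  | mul_simple_left w i ih =>
    intro t ε
    have hm : phi cs (cs.simple i * w) = fperm cs i * phi cs w := by
      rw [map_mul, phi_simple]
    have h1 : eta cs (cs.simple i * w) t
        = if w * t * w⁻¹ = cs.simple i then -(eta cs w t) else eta cs w t := by
      rw [eta, hm, Equiv.Perm.mul_apply, ih t 1, fperm_apply]
      simp [eta]
    rw [hm, Equiv.Perm.mul_apply, ih t ε, fperm_apply, h1]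
    dsimp only
    rw [Prod.mk.injEq]
    constructor
    · simp [mul_assoc, mul_inv_rev, cs.inv_simple]
    · split_ifs <;> simp [mul_comm, mul_left_comm]

lemma eta_mul (w v t : W) : eta cs (w * v) t = eta cs v t * eta cs w (v * t * v⁻¹) := by
  have : phi cs (w * v) (t, 1) = phi cs w (phi cs v (t, 1)) := by
    rw [map_mul, Equiv.Perm.mul_apply]
  rw [eta, this, phi_apply cs v t 1, one_mul, phi_apply cs w (v * t * v⁻¹) (eta cs v t)]

lemma eta_simple (i : B) (t : W) :
    eta cs (cs.simple i) t = if t = cs.simple i then -1 else 1 := by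
  rw [eta, phi_simple, fperm_apply]

lemma eta_wordProd (ω : List B) (t : W) :
    eta cs (cs.wordProd ω) t = (-1 : ℤˣ) ^ (List.count t (cs.rightInvSeq ω)) := by
  induction ω with
  | nil =>
    have : eta cs (1 : W) t = 1 := by simp [eta, map_one]
    simpa [cs.wordProd_nil] using this
  | cons i ω ih =>
    rw [cs.wordProd_cons, eta_mul, ih, eta_simple]
    have hris : cs.rightInvSeq (i :: ω)
        = ((cs.wordProd ω)⁻¹ * cs.simple i * cs.wordProd ω) :: cs.rightInvSeq ω := rfl
    rw [hris, List.count_cons]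
    have hiff : (cs.wordProd ω * t * (cs.wordProd ω)⁻¹ = cs.simple i)
        ↔ ((cs.wordProd ω)⁻¹ * cs.simple i * cs.wordProd ω = t) := by
      constructor <;> intro h <;> rw [← h] <;> group
    by_cases hc : (cs.wordProd ω)⁻¹ * cs.simple i * cs.wordProd ω = t
    · rw [if_pos (hiff.mpr hc), if_pos (by simpa using hc), pow_add, pow_one, mul_comm]
    · rw [if_neg (fun h => hc (hiff.mp h)), if_neg (by simpa using hc), add_zero, mul_one]

lemma eta_refl_self {t : W} (ht : cs.IsReflection t) : eta cs t t = -1 := by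
  obtain ⟨v, i, rfl⟩ := ht
  set t := v * cs.simple i * v⁻¹ with hdef
  have hsi : v⁻¹ * t * (v⁻¹)⁻¹ = cs.simple i := by
    rw [hdef]; group
  have h1 : phi cs v⁻¹ (t, 1) = (cs.simple i, eta cs v⁻¹ t) := by
    rw [phi_apply, hsi, one_mul]
  have hid : phi cs v (phi cs v⁻¹ (t, 1)) = (t, 1) := by
    rw [← Equiv.Perm.mul_apply, ← map_mul, mul_inv_cancel, map_one, Equiv.Perm.one_apply]
  have h2 : eta cs v⁻¹ t * eta cs v (cs.simple i) = 1 := by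
    have := hid
    rw [h1, phi_apply cs v (cs.simple i) (eta cs v⁻¹ t)] at this
    exact (congrArg Prod.snd this)
  have hmul : phi cs t (t, 1) = phi cs v (phi cs (cs.simple i) (phi cs v⁻¹ (t, 1))) := by
    rw [hdef, map_mul, map_mul, Equiv.Perm.mul_apply, Equiv.Perm.mul_apply]
  have hf : fperm cs i (cs.simple i, eta cs v⁻¹ t) = (cs.simple i, -(eta cs v⁻¹ t)) := by
    rw [fperm_apply]
    dsimp only
    rw [if_pos rfl, cs.simple_mul_simple_self, one_mul]
  rw [eta, hmul, h1, phi_simple, hf, phi_apply cs v (cs.simple i) (-(eta cs v⁻¹ t))]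
  show -(eta cs v⁻¹ t) * eta cs v (cs.simple i) = -1
  rw [neg_mul, h2]

lemma isRightInversion_of_eta {ω : List B} (hω : cs.IsReduced ω) {t : W}
    (h : eta cs (cs.wordProd ω) t = -1) : cs.IsRightInversion (cs.wordProd ω) t := by
  apply cs.isRightInversion_of_mem_rightInvSeq hω
  by_contra hmem
  rw [eta_wordProd, List.count_eq_zero.mpr hmem, pow_zero] at h
  exact absurd h (by decide)

lemma eta_eq_neg_one_of_inv {w t : W} (ht : cs.IsReflection t)
    (h : cs.length (w * t) < cs.length w) : eta cs w t = -1 := by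
  have h1 : eta cs w t = eta cs t t * eta cs (w * t) (t * t * t⁻¹) := by
    conv_lhs => rw [show w = (w * t) * t by rw [mul_assoc, ht.mul_self, mul_one]]
    exact eta_mul cs (w * t) t t
  have h2 : t * t * t⁻¹ = t := by rw [ht.mul_self, one_mul, ht.inv]
  have h3 : eta cs (w * t) t = 1 := by
    rcases Int.units_eq_one_or (eta cs (w * t) t) with hh | hh
    · exact hh
    · exfalso
      obtain ⟨τ, hτ, hπ⟩ := cs.exists_reduced_word' (w * t)
      rw [hπ] at hh
      have hinv := (isRightInversion_of_eta cs hτ hh).2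
      rw [← hπ, mul_assoc, ht.mul_self, mul_one] at hinv
      omega
  rw [h1, h2, h3, mul_one, eta_refl_self cs ht]

lemma eta_neg_iff {t : W} (ht : cs.IsReflection t) (w : W) :
    cs.length (w * t) < cs.length w ↔ eta cs w t = -1 := by
  constructor
  · exact eta_eq_neg_one_of_inv cs ht
  · intro h
    obtain ⟨ω, hω, hπ⟩ := cs.exists_reduced_word' w
    rw [hπ] at h ⊢
    exact (isRightInversion_of_eta cs hω h).2

/-- The set of right inversions of `w`. -/
def invSet (w : W) : Set W := {t | cs.IsReflection t ∧ cs.length (w * t) < cs.length w}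

lemma ncard_invSet (w : W) : (invSet cs w).ncard = cs.length w := by
  obtain ⟨ω, hω, rfl⟩ := cs.exists_reduced_word' w
  have hset : invSet cs (cs.wordProd ω) = ↑(cs.rightInvSeq ω).toFinset := by
    ext t
    simp only [invSet, Set.mem_setOf_eq, List.coe_toFinset]
    constructor
    · rintro ⟨ht, hl⟩
      have := eta_eq_neg_one_of_inv cs ht hl
      rw [eta_wordProd] at this
      by_contra hmem
      rw [List.count_eq_zero.mpr hmem, pow_zero] at this
      exact absurd this (by decide)
    · intro hmem
      have := cs.isRightInversion_of_mem_rightInvSeq hω hmem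
      exact ⟨this.1, this.2⟩
  rw [hset, Set.ncard_coe_finset, List.toFinset_card_of_nodup (hω.nodup_rightInvSeq),
    cs.length_rightInvSeq]
  exact hω.symm

section Fin

variable [Finite W]

/-- The set of all reflections. -/
def reflSet : Set W := {t | cs.IsReflection t}

lemma invSet_subset (w : W) : invSet cs w ⊆ reflSet cs := fun _ ht => ht.1

lemma length_mul_of_max (w₀ : W) (hw₀ : ∀ v : W, cs.length v ≤ cs.length w₀) (x : W) :
    cs.length (w₀ * x) + cs.length x = cs.length w₀ := by
  have hmax : ∀ t : W, cs.IsReflection t → cs.length (w₀ * t) < cs.length w₀ := by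
    intro t ht
    exact lt_of_le_of_ne (hw₀ _) (ht.length_mul_left_ne w₀)
  have hset : invSet cs (w₀ * x) = reflSet cs \ invSet cs x := by
    ext t
    by_cases ht : cs.IsReflection t
    · have hconj : cs.IsReflection (x * t * x⁻¹) := ht.conj x
      have heta : eta cs (w₀ * x) t = eta cs x t * eta cs w₀ (x * t * x⁻¹) := eta_mul cs w₀ x t
      have hw : eta cs w₀ (x * t * x⁻¹) = -1 :=
        eta_eq_neg_one_of_inv cs hconj (hmax _ hconj)
      constructor
      · rintro ⟨-, hl⟩
        refine ⟨ht, ?_⟩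
        rintro ⟨-, hl'⟩
        have h1 := (eta_neg_iff cs ht (w₀ * x)).mp hl
        have h2 := (eta_neg_iff cs ht x).mp hl'
        rw [heta, h2, hw] at h1
        exact absurd h1 (by decide)
      · rintro ⟨-, hnot⟩
        refine ⟨ht, (eta_neg_iff cs ht (w₀ * x)).mpr ?_⟩
        have h2 : eta cs x t = 1 := by
          rcases Int.units_eq_one_or (eta cs x t) with hh | hh
          · exact hh
          · exact absurd ⟨ht, (eta_neg_iff cs ht x).mpr hh⟩ hnot
        rw [heta, h2, hw, one_mul]
    · constructor
      · rintro ⟨h, -⟩; exact absurd h ht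
      · rintro ⟨h, -⟩; exact absurd h ht
  have hcard := congrArg Set.ncard hset
  rw [ncard_invSet, Set.ncard_diff (invSet_subset cs x) (Set.toFinite _), ncard_invSet] at hcard
  have h1 : cs.length x ≤ (reflSet cs).ncard := by
    rw [← ncard_invSet cs x]
    exact Set.ncard_le_ncard (invSet_subset cs x) (Set.toFinite _)
  have h2 : (reflSet cs).ncard = cs.length w₀ := by
    rw [← ncard_invSet cs w₀]
    congr 1
    ext t
    simp only [invSet, reflSet, Set.mem_setOf_eq]
    exact ⟨fun h => ⟨h, hmax t h⟩, fun h => h.1⟩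
  omega

/-- An element all of whose left descents include every simple reflection equals the
longest element. -/
lemma eq_longest (w₀ : W) (hw₀ : ∀ v : W, cs.length v ≤ cs.length w₀) (a : W)
    (ha : ∀ i : B, cs.length (cs.simple i * a) < cs.length a) : a = w₀ := by
  have hsum := length_mul_of_max cs w₀ hw₀ a⁻¹
  obtain ⟨ω₁, hω₁, hπ₁⟩ := cs.exists_reduced_word' (w₀ * a⁻¹)
  obtain ⟨ω₂, hω₂, hπ₂⟩ := cs.exists_reduced_word' a
  have hred : cs.IsReduced (ω₁ ++ ω₂) := by
    show cs.length (cs.wordProd (ω₁ ++ ω₂)) = (ω₁ ++ ω₂).length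
    rw [cs.wordProd_append, ← hπ₁, ← hπ₂]
    have hW : w₀ * a⁻¹ * a = w₀ := by group
    have e1 : ω₁.length = cs.length (w₀ * a⁻¹) := by
      rw [hπ₁]; exact Eq.symm hω₁
    have e2 : ω₂.length = cs.length a := by
      rw [hπ₂]; exact Eq.symm hω₂
    have e3 : cs.length a⁻¹ = cs.length a := cs.length_inv a
    rw [hW, List.length_append]
    omega
  rcases List.eq_nil_or_concat ω₁ with h | ⟨ω₁', i, rfl⟩
  · rw [h] at hπ₁
    simp only [cs.wordProd_nil] at hπ₁
    exact (mul_inv_eq_one.mp hπ₁).symm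
  · exfalso
    have hred2 : cs.IsReduced (i :: ω₂) := by
      have hdrop := hred.drop (j := ω₁'.length)
      rwa [List.concat_eq_append, List.append_assoc, List.drop_left,
        List.singleton_append] at hdrop
    have hlen : cs.length (cs.simple i * a) = ω₂.length + 1 := by
      have h := hred2
      unfold CoxeterSystem.IsReduced at h
      rw [cs.wordProd_cons, ← hπ₂] at h
      simpa using h
    have e2 : ω₂.length = cs.length a := by
      rw [hπ₂]; exact Eq.symm hω₂
    have := ha i
    omega

end Fin

end Aux618

/-- 6.18: in a finite Coxeter system, if `σ` is an automorphism preserving the set `S`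
of simple reflections, `I', I'' ⊆ S`, and every element of `S` lies in the `σ`-orbit of
some element of `I'`, then the set of `σ`-fixed elements having every element of `I'` as
a left descent and every element of `I''` as a right descent is exactly `{w₀}`, where
`w₀` is the longest element. -/
theorem fixed_with_descents_eq_longest
    {B W : Type*} [Group W] [Finite W] {M : CoxeterMatrix B} (cs : CoxeterSystem M W)
    (σ : W ≃* W) (hσ : (⇑σ) '' Set.range cs.simple = Set.range cs.simple)
    (I' I'' : Set W) (hI' : I' ⊆ Set.range cs.simple) (hI'' : I'' ⊆ Set.range cs.simple)
    (horb : ∀ s ∈ Set.range cs.simple, ∃ n : ℕ, ∃ s' ∈ I', s = (⇑σ)^[n] s')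
    (w₀ : W) (hw₀ : ∀ v : W, cs.length v ≤ cs.length w₀) :
    {a : W | σ a = a ∧ (∀ s ∈ I', cs.length (s * a) < cs.length a) ∧
        (∀ s ∈ I'', cs.length (a * s) < cs.length a)} = {w₀} := by
  letI : DecidableEq W := Classical.decEq W
  -- σ and σ.symm preserve simples, hence length
  have hsub : ∀ τ : W ≃* W, (⇑τ) '' Set.range cs.simple ⊆ Set.range cs.simple →
      ∀ x : W, cs.length (τ x) ≤ cs.length x := by
    intro τ hτ x
    obtain ⟨ω, hω, rfl⟩ := cs.exists_reduced_word' x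
    have key : ∀ ω' : List B, cs.length (τ (cs.wordProd ω')) ≤ ω'.length := by
      intro ω'
      induction ω' with
      | nil => simp [cs.wordProd_nil, map_one]
      | cons i ω' ih =>
        rw [cs.wordProd_cons, map_mul]
        obtain ⟨j, hj⟩ : ∃ j : B, cs.simple j = τ (cs.simple i) :=
          hτ ⟨cs.simple i, ⟨i, rfl⟩, rfl⟩
        rw [← hj]
        rcases cs.length_simple_mul (τ (cs.wordProd ω')) j with h | h <;>
          · simp only [List.length_cons]; omega
    calc cs.length (τ (cs.wordProd ω)) ≤ ω.length := key ω
      _ = cs.length (cs.wordProd ω) := hω.symm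
  have hsymm : (⇑σ.symm) '' Set.range cs.simple ⊆ Set.range cs.simple := by
    intro y hy
    obtain ⟨z, hz, rfl⟩ := hy
    rw [← hσ] at hz
    obtain ⟨u, hu, rfl⟩ := hz
    simpa using hu
  have hσlen : ∀ x : W, cs.length (σ x) = cs.length x := by
    intro x
    refine le_antisymm (hsub σ (le_of_eq hσ) x) ?_
    have := hsub σ.symm hsymm (σ x)
    rwa [MulEquiv.symm_apply_apply] at this
  have hiter_mul : ∀ (n : ℕ) (x y : W), (⇑σ)^[n] (x * y) = (⇑σ)^[n] x * (⇑σ)^[n] y := by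
    intro n
    induction n with
    | zero => intro x y; simp
    | succ n ih =>
      intro x y
      rw [Function.iterate_succ_apply', Function.iterate_succ_apply',
        Function.iterate_succ_apply', ih, map_mul]
  have hiter_len : ∀ (n : ℕ) (x : W), cs.length ((⇑σ)^[n] x) = cs.length x := by
    intro n
    induction n with
    | zero => intro x; simp
    | succ n ih =>
      intro x
      rw [Function.iterate_succ_apply', hσlen, ih]
  ext a
  simp only [Set.mem_setOf_eq, Set.mem_singleton_iff]
  constructor
  · rintro ⟨hfix, hL, -⟩
    apply Aux618.eq_longest cs w₀ hw₀
    intro i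
    obtain ⟨n, s', hs', hseq⟩ := horb (cs.simple i) ⟨i, rfl⟩
    have hfa' : ∀ m : ℕ, (⇑σ)^[m] a = a := by
      intro m
      induction m with
      | zero => rfl
      | succ m ih => rw [Function.iterate_succ_apply', ih, hfix]
    have hfa : (⇑σ)^[n] a = a := hfa' n
    calc cs.length (cs.simple i * a)
        = cs.length ((⇑σ)^[n] s' * (⇑σ)^[n] a) := by rw [← hseq, hfa]
      _ = cs.length ((⇑σ)^[n] (s' * a)) := by rw [hiter_mul]
      _ = cs.length (s' * a) := hiter_len n _
      _ < cs.length a := hL s' hs'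
  · intro h
    rw [h]
    refine ⟨?_, ?_, ?_⟩
    · apply Aux618.eq_longest cs w₀ hw₀
      intro i
      obtain ⟨j, hj⟩ : ∃ j : B, cs.simple j = σ.symm (cs.simple i) :=
        hsymm ⟨cs.simple i, ⟨i, rfl⟩, rfl⟩
      have hkey : cs.simple i * σ w₀ = σ (σ.symm (cs.simple i) * w₀) := by
        rw [map_mul, MulEquiv.apply_symm_apply]
      rw [hkey, hσlen, ← hj, hσlen]
      exact lt_of_le_of_ne (hw₀ _) (cs.length_simple_mul_ne w₀ j)
    · intro s hs
      obtain ⟨i, hi⟩ := hI' hs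
      rw [← hi]
      exact lt_of_le_of_ne (hw₀ _) (cs.length_simple_mul_ne w₀ i)
    · intro s hs
      obtain ⟨i, hi⟩ := hI'' hs
      rw [← hi]
      exact lt_of_le_of_ne (hw₀ _) (cs.length_mul_simple_ne w₀ i)
end

section
/- Let (W,S) be a Coxeter system with S finite, δ an automorphism of W with δ(S) = S, and J ⊆ S. Call a sequence t = (J_n, w_n)_{n≥0} admissible if: J_0 = J; J_n = J_{n-1} ∩ w_{n-1} δ(J_{n-1}) w_{n-1}^{-1} for all n ≥ 1; w_n is the minimal length element of both W_{J_n} w_n and w_n W_{δ(J_n)} for all n ≥ 0; and w_n ∈ W_{J_n} w_{n-1} W_{δ(J_{n-1})} for all n ≥ 1. Then: (i) every admissible sequence satisfies J_n = J_{n+1} and w_n = w_{n+1} for all n ≥ |S|; and (ii) the map sending an admissible sequence t to its eventual value w_∞ is a bijection from the set of admissible sequences onto ᴶW = { w ∈ W : l(sw) > l(w) for all s ∈ J }. -/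
namespace CoxeterSystem

open List

variable {B : Type*} {W : Type*} [Group W] {M : CoxeterMatrix B} (cs : CoxeterSystem M W)

local prefix:100 "s" => cs.simple
local prefix:100 "π" => cs.wordProd
local prefix:100 "ℓ" => cs.length

attribute [local instance] Classical.propDecidable

private noncomputable def bPerm (i : B) : Equiv.Perm (W × ZMod 2) :=
  Function.Involutive.toPerm
    (fun p => (s i * p.1 * s i, p.2 + if p.1 = s i then 1 else 0))
    (by
      rintro ⟨w, e⟩
      have hiff : (s i * w * s i = s i) ↔ (w = s i) := by
        constructor
        · intro h
          have := congrArg (fun x => s i * x * s i) h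
          simpa [mul_assoc, cs.simple_mul_simple_cancel_left,
            cs.simple_mul_simple_cancel_right, cs.simple_mul_simple_self] using this
        · intro h
          rw [h, cs.simple_mul_simple_self, one_mul]
      refine Prod.ext ?_ ?_
      · show s i * (s i * w * s i) * s i = w
        simp [mul_assoc, cs.simple_mul_simple_cancel_left, cs.simple_mul_simple_cancel_right]
      · show e + (if w = s i then 1 else 0) + (if s i * w * s i = s i then 1 else 0) = e
        by_cases h : w = s i
        · rw [if_pos h, if_pos (hiff.mpr h), add_assoc,
            (by decide : (1 : ZMod 2) + 1 = 0), add_zero]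
        · rw [if_neg h, if_neg (fun hh => h (hiff.mp hh)), add_zero, add_zero])

private lemma bPerm_apply (i : B) (w : W) (e : ZMod 2) :
    cs.bPerm i (w, e) = (s i * w * s i, e + if w = s i then 1 else 0) := rfl

private lemma prod_bPerm_apply (ω : List B) (w : W) (e : ZMod 2) :
    ((ω.map cs.bPerm).prod) (w, e)
      = (π ω * w * (π ω)⁻¹, e + ((cs.rightInvSeq ω).count w : ZMod 2)) := by
  induction ω generalizing w e with
  | nil => simp
  | cons i ω ih =>
    rw [map_cons, prod_cons, Equiv.Perm.mul_apply, ih, bPerm_apply]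
    have hris : cs.rightInvSeq (i :: ω) = ((π ω)⁻¹ * s i * π ω) :: cs.rightInvSeq ω := rfl
    refine Prod.ext ?_ ?_
    · show s i * (π ω * w * (π ω)⁻¹) * s i = π (i :: ω) * w * (π (i :: ω))⁻¹
      rw [cs.wordProd_cons, mul_inv_rev, cs.inv_simple]
      group
    · show e + ((cs.rightInvSeq ω).count w : ZMod 2)
          + (if π ω * w * (π ω)⁻¹ = s i then 1 else 0)
        = e + ((cs.rightInvSeq (i :: ω)).count w : ZMod 2)
      rw [hris]
      simp only [List.count_cons, beq_iff_eq]
      have hiff : (π ω * w * (π ω)⁻¹ = s i) ↔ ((π ω)⁻¹ * s i * π ω = w) := by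
        constructor
        · intro h; rw [← h]; group
        · intro h; rw [← h]; group
      rw [Nat.cast_add, Nat.cast_ite, Nat.cast_one, Nat.cast_zero]
      by_cases hcond : π ω * w * (π ω)⁻¹ = s i
      · rw [if_pos hcond, if_pos (hiff.mp hcond)]; ring
      · rw [if_neg hcond, if_neg (fun hh => hcond (hiff.mpr hh))]; ring

private lemma bPerm_pow (i i' : B) (m : ℕ) :
    (cs.bPerm i * cs.bPerm i') ^ m = ((alternatingWord i i' (2*m)).map cs.bPerm).prod := by
  induction m with
  | zero => simp [alternatingWord]
  | succ m ih =>
    have e1 : alternatingWord i i' (2*m+1+1) = i :: alternatingWord i i' (2*m+1) := by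
      rw [alternatingWord_succ']
      simp [Nat.even_add_one, Nat.even_mul]
    have e2 : alternatingWord i i' (2*m+1) = i' :: alternatingWord i i' (2*m) := by
      rw [alternatingWord_succ']
      simp [Nat.even_mul]
    rw [show 2*(m+1) = 2*m+1+1 by ring, e1, e2, map_cons, map_cons, prod_cons, prod_cons,
      ← ih, pow_succ', mul_assoc]

private lemma drop_alternatingWord (i i' : B) (k n : ℕ) :
    (alternatingWord i i' n).drop k = alternatingWord i i' (n - k) := by
  induction k generalizing n with
  | zero => simp
  | succ k ih =>
    cases n with
    | zero => simp [alternatingWord]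
    | succ n => rw [alternatingWord_succ', drop_succ_cons, ih, Nat.succ_sub_succ]

private lemma aux_conj_pow {G : Type*} [Group G] (a b : G) (ha : a * a = 1) (hb : b * b = 1)
    (k : ℕ) : (a*b)^k * (b * (a*b)^(2*k)) = b * (a*b)^k := by
  have hcore : (a*b) * (b * (a*b)) = b := by
    calc (a*b) * (b * (a*b)) = a * (b * b) * (a * b) := by simp [mul_assoc]
      _ = a * (a * b) := by rw [hb, mul_one]
      _ = (a * a) * b := by rw [mul_assoc]
      _ = b := by rw [ha, one_mul]
  induction k with
  | zero => simp
  | succ k ih =>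
    have e1 : (a*b)^(2*(k+1)) = (a*b) * ((a*b)^(2*k) * (a*b)) := by
      rw [show 2*(k+1) = 1 + (2*k + 1) by ring, pow_add, pow_add, pow_one]
    calc (a*b)^(k+1) * (b * (a*b)^(2*(k+1)))
        = (a*b)^k * (((a*b) * (b * (a*b))) * ((a*b)^(2*k) * (a*b))) := by
          rw [pow_succ, e1]; simp [mul_assoc]
      _ = (a*b)^k * (b * ((a*b)^(2*k) * (a*b))) := by rw [hcore]
      _ = ((a*b)^k * (b * (a*b)^(2*k))) * (a*b) := by simp [mul_assoc]
      _ = (b * (a*b)^k) * (a*b) := by rw [ih]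
      _ = b * (a*b)^(k+1) := by rw [pow_succ]; simp [mul_assoc]

private lemma pow_inv_simple_pow (i i' : B) (k : ℕ) :
    ((s i * s i')^k)⁻¹ * s i' * (s i * s i')^k = s i' * (s i * s i')^(2*k) := by
  have h := aux_conj_pow (s i) (s i') (cs.simple_mul_simple_self i) (cs.simple_mul_simple_self i') k
  rw [mul_assoc, ← h, inv_mul_cancel_left]

private lemma getD_ris_alternatingWord (i i' : B) {n j : ℕ} (hj : j < n) :
    (cs.rightInvSeq (alternatingWord i i' n)).getD j 1
      = s i' * (s i * s i') ^ (n - 1 - j) := by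
  rw [cs.getD_rightInvSeq, drop_alternatingWord]
  have hget : (alternatingWord i i' n)[j]? = some (if Even (n - 1 - j) then i' else i) := by
    have h0 : (alternatingWord i i' n)[j]? = ((alternatingWord i i' n).drop j)[0]? := by
      rw [List.getElem?_drop]
      norm_num
    rw [h0, drop_alternatingWord]
    have hnj : n - j = (n - 1 - j) + 1 := by omega
    rw [hnj, alternatingWord_succ']
    rfl
  rw [hget]
  simp only [Option.map_some, Option.getD_some]
  have hq : n - (j+1) = n - 1 - j := by omega
  rw [hq]
  set q := n - 1 - j with hqdef
  have hstep : s (if Even q then i' else i) * π (alternatingWord i i' q)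
      = π (alternatingWord i i' (q+1)) := by
    rw [alternatingWord_succ', cs.wordProd_cons]
  rw [mul_assoc, hstep]
  rcases Nat.even_or_odd q with hq2 | hq2
  · obtain ⟨r, hr⟩ := hq2
    rw [cs.prod_alternatingWord_eq_mul_pow, cs.prod_alternatingWord_eq_mul_pow]
    rw [if_pos ⟨r, hr⟩, if_neg (by rw [hr]; intro h; rcases h with ⟨x, hx⟩; omega)]
    rw [one_mul]
    have h1 : q / 2 = r := by omega
    have h2 : (q+1) / 2 = r := by omega
    rw [h1, h2, ← mul_assoc, pow_inv_simple_pow]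
    rw [show (2:ℕ)*r = q by omega]
  · obtain ⟨r, hr⟩ := hq2
    rw [cs.prod_alternatingWord_eq_mul_pow, cs.prod_alternatingWord_eq_mul_pow]
    rw [if_neg (by rw [hr]; intro h; rcases h with ⟨x, hx⟩; omega),
        if_pos (by rw [hr]; exact ⟨r+1, by ring⟩)]
    have h1 : q / 2 = r := by omega
    have h2 : (q+1) / 2 = r + 1 := by omega
    rw [h1, h2, one_mul, mul_inv_rev, cs.inv_simple, pow_succ]
    calc ((s i * s i')^r)⁻¹ * s i' * ((s i * s i')^r * (s i * s i'))
        = (((s i * s i')^r)⁻¹ * s i' * (s i * s i')^r) * (s i * s i') := by group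
      _ = s i' * (s i * s i')^(2*r) * (s i * s i') := by rw [pow_inv_simple_pow]
      _ = s i' * (s i * s i')^q := by
          rw [show q = 2*r + 1 by omega, pow_succ]; group

private lemma count_ris_braid_even (i i' : B) (w : W) :
    Even ((cs.rightInvSeq (alternatingWord i i' (2 * M i i'))).count w) := by
  have hz : (s i * s i') ^ M i i' = 1 := cs.simple_mul_simple_pow i i'
  set m := M i i' with hm
  set l := cs.rightInvSeq (alternatingWord i i' (2*m)) with hl
  have hlen : l.length = 2*m := by
    rw [hl, cs.length_rightInvSeq, length_alternatingWord]
  have hsplit : l = l.take m ++ l.take m := by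
    conv_lhs => rw [← List.take_append_drop m l]
    congr 1
    apply List.ext_getElem
    · simp only [List.length_take, List.length_drop, hlen]
      omega
    · intro j h1 h2
      have hjm : j < m := by
        simp only [List.length_drop, hlen] at h1; omega
      have e1 : (l.drop m)[j]'h1 = l.getD (m + j) 1 := by
        rw [List.getElem_drop, List.getD_eq_getElem]
      have e2 : (l.take m)[j]'h2 = l.getD j 1 := by
        rw [List.getElem_take, List.getD_eq_getElem]
      rw [e1, e2, hl, getD_ris_alternatingWord cs i i' (by omega : m + j < 2*m),
        getD_ris_alternatingWord cs i i' (by omega : j < 2*m)]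
      have harith : 2*m - 1 - j = (2*m - 1 - (m+j)) + m := by omega
      rw [harith, pow_add, hz, mul_one]
  have : l.count w = l.count w + l.count w → Even (l.count w) := by
    intro h; exact ⟨l.count w, by omega⟩
  rw [show l.count w = ((l.take m ++ l.take m).count w) by rw [← hsplit]]
  rw [List.count_append]
  exact ⟨(l.take m).count w, rfl⟩

private lemma bPerm_liftable : M.IsLiftable cs.bPerm := by
  intro i i'
  rw [bPerm_pow]
  apply Equiv.ext
  rintro ⟨w, e⟩
  rw [prod_bPerm_apply]
  have h1 : π (alternatingWord i i' (2 * M i i')) = 1 := by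
    rw [cs.prod_alternatingWord_eq_mul_pow, if_pos (even_two_mul _)]
    rw [one_mul, Nat.mul_div_cancel_left _ (by norm_num : 0 < 2)]
    exact cs.simple_mul_simple_pow i i'
  have h2 : (((cs.rightInvSeq (alternatingWord i i' (2 * M i i'))).count w : ZMod 2)) = 0 := by
    rw [ZMod.natCast_eq_zero_iff]
    exact even_iff_two_dvd.mp (cs.count_ris_braid_even i i' w)
  rw [h1, h2]
  simp

private noncomputable def bHom : W →* Equiv.Perm (W × ZMod 2) :=
  cs.lift ⟨cs.bPerm, cs.bPerm_liftable⟩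

private lemma bHom_simple (i : B) : cs.bHom (s i) = cs.bPerm i :=
  cs.lift_apply_simple cs.bPerm_liftable i

private lemma bHom_apply_wordProd (ω : List B) (w : W) (e : ZMod 2) :
    cs.bHom (π ω) (w, e) = (π ω * w * (π ω)⁻¹, e + ((cs.rightInvSeq ω).count w : ZMod 2)) := by
  have h : cs.bHom (π ω) = ((ω.map cs.bPerm)).prod := by
    show cs.bHom (ω.map cs.simple).prod = _
    rw [map_list_prod, List.map_map]
    exact congrArg List.prod (List.map_congr_left (fun i _ => cs.bHom_simple i))
  rw [h, prod_bPerm_apply]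

private lemma bHom_reflection_apply {t : W} (ht : cs.IsReflection t) (e : ZMod 2) :
    cs.bHom t (t, e) = (t, e + 1) := by
  obtain ⟨v, i, rfl⟩ := ht
  obtain ⟨ω, rfl⟩ := cs.wordProd_surjective v
  induction ω generalizing e with
  | nil =>
    simp only [wordProd_nil, one_mul, inv_one, mul_one]
    rw [cs.bHom_simple, bPerm_apply, if_pos rfl]
    rw [cs.simple_mul_simple_self, one_mul]
  | cons j ω ih =>
    have hc : π (j :: ω) * s i * (π (j :: ω))⁻¹
        = s j * (π ω * s i * (π ω)⁻¹) * s j := by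
      rw [cs.wordProd_cons, mul_inv_rev, cs.inv_simple]
      group
    set c' := π ω * s i * (π ω)⁻¹ with hc'
    rw [hc]
    have hsplit : cs.bHom (s j * c' * s j) = cs.bPerm j * cs.bHom c' * cs.bPerm j := by
      rw [map_mul, map_mul, cs.bHom_simple]
    rw [hsplit, Equiv.Perm.mul_apply, Equiv.Perm.mul_apply]
    have hback : s j * (s j * c' * s j) * s j = c' := by
      calc s j * (s j * c' * s j) * s j = (s j * s j) * c' * (s j * s j) := by simp [mul_assoc]
        _ = c' := by rw [cs.simple_mul_simple_self]; simp
    have st1 : cs.bPerm j (s j * c' * s j, e)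
        = (c', e + if s j * c' * s j = s j then 1 else 0) := by
      rw [bPerm_apply, hback]
    rw [st1, ih, bPerm_apply]
    have hiff : (s j * c' * s j = s j) ↔ (c' = s j) := by
      constructor
      · intro h
        have := congrArg (fun x => s j * x * s j) h
        simpa [mul_assoc, cs.simple_mul_simple_cancel_left,
          cs.simple_mul_simple_cancel_right, cs.simple_mul_simple_self] using this
      · intro h
        rw [h, cs.simple_mul_simple_self, one_mul]
    refine Prod.ext rfl ?_
    show e + (if s j * c' * s j = s j then 1 else 0) + 1 + (if c' = s j then 1 else 0) = e + 1
    by_cases h : c' = s j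
    · rw [if_pos (hiff.mpr h), if_pos h]
      have h2 : (1 : ZMod 2) + 1 = 0 := by decide
      calc e + 1 + 1 + 1 = e + 1 + (1 + 1) := by ring
        _ = e + 1 := by rw [h2, add_zero]
    · rw [if_neg (fun hh => h (hiff.mp hh)), if_neg h, add_zero, add_zero]

lemma mem_rightInvSeq_of_isRightInversion (ω : List B) {t : W}
    (ht : cs.IsRightInversion (π ω) t) : t ∈ cs.rightInvSeq ω := by
  obtain ⟨σ, hσred, hσ⟩ := cs.exists_reduced_word' (π ω * t)
  have htt : t * t = 1 := ht.1.mul_self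
  have hωσ : π ω = π σ * t := by
    rw [← hσ, mul_assoc, htt, mul_one]
  have hnot : t ∉ cs.rightInvSeq σ := by
    intro hmem
    have h2 := (cs.isRightInversion_of_mem_rightInvSeq hσred hmem).2
    rw [← hσ] at h2
    rw [mul_assoc, htt, mul_one] at h2
    rw [hσ] at h2
    have h3 := ht.2
    rw [hσ] at h3
    omega
  have key1 := cs.bHom_apply_wordProd ω t 0
  have key2 : cs.bHom (π ω) (t, 0) = (π σ * t * (π σ)⁻¹, 1 + ((cs.rightInvSeq σ).count t : ZMod 2)) := by
    rw [hωσ, map_mul, Equiv.Perm.mul_apply, cs.bHom_reflection_apply ht.1, zero_add,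
      cs.bHom_apply_wordProd σ t 1]
  have hcount0 : ((cs.rightInvSeq σ).count t : ZMod 2) = 0 := by
    rw [List.count_eq_zero_of_not_mem hnot]
    rfl
  have hsnd := congrArg Prod.snd (key1.symm.trans key2)
  simp only [hcount0, add_zero, zero_add] at hsnd
  by_contra hmem
  rw [List.count_eq_zero_of_not_mem hmem] at hsnd
  simp at hsnd

theorem rightExchange {ω : List B} {t : W} (ht : cs.IsRightInversion (π ω) t) :
    ∃ j < ω.length, π ω * t = π (ω.eraseIdx j) := by
  have hmem := cs.mem_rightInvSeq_of_isRightInversion ω ht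
  obtain ⟨j, hj, hjt⟩ := List.mem_iff_getElem.mp hmem
  rw [cs.length_rightInvSeq] at hj
  refine ⟨j, hj, ?_⟩
  have : (cs.rightInvSeq ω).getD j 1 = t := by
    rw [List.getD_eq_getElem _ _ (by rw [cs.length_rightInvSeq]; exact hj)]
    exact hjt
  rw [← this, cs.wordProd_mul_getD_rightInvSeq]


private lemma wordProd_mem_closure {L : Set W} {ω : List B}
    (hω : ∀ i ∈ ω, cs.simple i ∈ L) : π ω ∈ Subgroup.closure L := by
  induction ω with
  | nil => rw [cs.wordProd_nil]; exact Subgroup.one_mem _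
  | cons i ω ih =>
    rw [cs.wordProd_cons]
    exact mul_mem (Subgroup.subset_closure (hω i (List.mem_cons_self (a := i) (l := ω))))
      (ih (fun j hj => hω j (List.mem_cons_of_mem i hj)))

private lemma exists_word_of_mem_closure {L : Set W} (hL : L ⊆ Set.range cs.simple) {u : W}
    (hu : u ∈ Subgroup.closure L) : ∃ ω : List B, (∀ i ∈ ω, cs.simple i ∈ L) ∧ π ω = u := by
  induction hu using Subgroup.closure_induction with
  | mem x hx =>
    obtain ⟨i, hi⟩ := hL hx
    exact ⟨[i], by simpa [hi] using hx, by simpa using hi⟩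
  | one => exact ⟨[], by simp, by simp⟩
  | mul x y _ _ hx hy =>
    obtain ⟨ω₁, h1, h2⟩ := hx
    obtain ⟨ω₂, h3, h4⟩ := hy
    refine ⟨ω₁ ++ ω₂, ?_, by rw [cs.wordProd_append, h2, h4]⟩
    intro i hi
    rcases List.mem_append.mp hi with h | h
    exacts [h1 i h, h3 i h]
  | inv x _ hx =>
    obtain ⟨ω, h1, h2⟩ := hx
    exact ⟨ω.reverse, fun i hi => h1 i (List.mem_reverse.mp hi),
      by rw [cs.wordProd_reverse, h2]⟩

private lemma exists_reduced_subword : ∀ n (ω : List B), ω.length ≤ n →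
    ∃ ω' : List B, cs.IsReduced ω' ∧ π ω' = π ω ∧ ∀ i ∈ ω', i ∈ ω := by
  intro n
  induction n with
  | zero =>
    intro ω hω
    rw [Nat.le_zero, List.length_eq_zero_iff] at hω
    subst hω
    exact ⟨[], by simp [IsReduced], rfl, by simp⟩
  | succ n ih =>
    intro ω hω
    by_cases hred : cs.IsReduced ω
    · exact ⟨ω, hred, rfl, fun _ h => h⟩
    cases ω with
    | nil => exact absurd (by simp [IsReduced]) hred
    | cons i ωt =>
      by_cases hredt : cs.IsReduced ωt
      · have hlt : ℓ (π (i :: ωt)) < (i :: ωt).length :=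
          lt_of_le_of_ne (cs.length_wordProd_le _) (fun h => hred h)
        have hlent : ℓ (π ωt) = ωt.length := hredt
        have hlen : ℓ (s i * π ωt) < ℓ (π ωt) := by
          rw [cs.wordProd_cons] at hlt
          rcases cs.length_simple_mul (π ωt) i with h | h
          · rw [List.length_cons] at hlt; omega
          · have hne := cs.length_simple_mul_ne (π ωt) i
            omega
        have hinv : cs.IsRightInversion (π ωt.reverse) (s i) := by
          refine ⟨cs.isReflection_simple i, ?_⟩
          have e1 : ℓ (π ωt.reverse * s i) = ℓ (s i * π ωt) := by
            rw [← cs.length_inv]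
            simp [mul_inv_rev, cs.inv_simple]
          rw [e1, cs.wordProd_reverse, cs.length_inv]
          exact hlen
        obtain ⟨j, hj, hdel⟩ := cs.rightExchange hinv
        set ω'' := (ωt.reverse.eraseIdx j).reverse with hω''
        have hπ : π ω'' = π (i :: ωt) := by
          rw [hω'', cs.wordProd_reverse, ← hdel, mul_inv_rev, cs.inv_simple,
            cs.wordProd_reverse, inv_inv, ← cs.wordProd_cons]
        rw [List.length_reverse] at hj
        have hlen'' : ω''.length ≤ n := by
          have h2 : j < ωt.reverse.length := by rw [List.length_reverse]; exact hj
          have := List.length_eraseIdx_add_one h2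
          rw [List.length_cons] at hω
          simp only [hω'', List.length_reverse] at *
          omega
        obtain ⟨ω', hred', hπ', hsub⟩ := ih ω'' hlen''
        refine ⟨ω', hred', by rw [hπ', hπ], ?_⟩
        intro x hx
        have h1 := hsub x hx
        rw [hω''] at h1
        have h2 : x ∈ ωt.reverse.eraseIdx j := List.mem_reverse.mp h1
        have h3 : x ∈ ωt := List.mem_reverse.mp ((List.eraseIdx_sublist ωt.reverse j).mem h2)
        exact List.mem_cons_of_mem i h3
      · rw [List.length_cons] at hω
        obtain ⟨ωt', hredt', hπt', hsubt⟩ := ih ωt (by omega)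
        have hlt : ωt'.length < ωt.length := by
          have h1 : ℓ (π ωt) < ωt.length :=
            lt_of_le_of_ne (cs.length_wordProd_le _) (fun h => hredt h)
          have h2 : ℓ (π ωt') = ωt'.length := hredt'
          rw [hπt'] at h2
          omega
        obtain ⟨ω', hred', hπ', hsub⟩ := ih (i :: ωt') (by rw [List.length_cons]; omega)
        refine ⟨ω', hred', ?_, ?_⟩
        · rw [hπ', cs.wordProd_cons, cs.wordProd_cons, hπt']
        · intro x hx
          rcases List.mem_cons.mp (hsub x hx) with h | h
          · exact h ▸ List.mem_cons_self (a := i) (l := ωt)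
          · exact List.mem_cons_of_mem i (hsubt x h)

private lemma exists_reduced_word_of_mem_closure {L : Set W} (hL : L ⊆ Set.range cs.simple)
    {u : W} (hu : u ∈ Subgroup.closure L) :
    ∃ ω : List B, (∀ i ∈ ω, cs.simple i ∈ L) ∧ cs.IsReduced ω ∧ π ω = u := by
  obtain ⟨ω, h1, h2⟩ := cs.exists_word_of_mem_closure hL hu
  obtain ⟨ω', hred, hπ, hsub⟩ := cs.exists_reduced_subword ω.length ω le_rfl
  exact ⟨ω', fun i hi => h1 i (hsub i hi), hred, hπ.trans h2⟩

private lemma min_additive {L : Set W} (hL : L ⊆ Set.range cs.simple) {w : W}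
    (hmin : ∀ u ∈ Subgroup.closure L, ℓ w ≤ ℓ (w * u)) :
    ∀ u ∈ Subgroup.closure L, ℓ (w * u) = ℓ w + ℓ u := by
  suffices h : ∀ n u, u ∈ Subgroup.closure L → ℓ u = n → ℓ (w * u) = ℓ w + ℓ u from
    fun u hu => h (ℓ u) u hu rfl
  intro n
  induction n using Nat.strong_induction_on with
  | _ n ih =>
    intro u hu hlu
    rcases eq_or_ne u 1 with rfl | hne
    · simp
    obtain ⟨ω, hωL, hωred, hωπ⟩ := cs.exists_reduced_word_of_mem_closure hL hu
    have hωne : ω ≠ [] := by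
      rintro rfl
      exact hne (by rw [← hωπ]; simp)
    obtain ⟨ω₀, i, rfl⟩ : ∃ ω₀ i, ω = ω₀ ++ [i] :=
      ⟨ω.dropLast, ω.getLast hωne, (List.dropLast_append_getLast hωne).symm⟩
    have hu0mem : π ω₀ ∈ Subgroup.closure L :=
      cs.wordProd_mem_closure (fun j hj => hωL j (List.mem_append_left _ hj))
    have hsiL : cs.simple i ∈ L := hωL i (List.mem_append_right _ (List.mem_singleton_self i))
    have husplit : u = π ω₀ * s i := by
      rw [← hωπ, cs.wordProd_append, cs.wordProd_singleton]
    have hred₀ : cs.IsReduced ω₀ := by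
      have h1 := hωred.take ω₀.length
      rwa [List.take_left] at h1
    have hlu₀ : ℓ (π ω₀) = ω₀.length := hred₀
    have hlenu : ℓ u = ω₀.length + 1 := by
      have h1 : ℓ (π (ω₀ ++ [i])) = (ω₀ ++ [i]).length := hωred
      rw [hωπ] at h1
      simpa using h1
    have ihu₀ : ℓ (w * π ω₀) = ℓ w + ℓ (π ω₀) := ih (ℓ (π ω₀)) (by omega) _ hu0mem rfl
    rcases cs.length_mul_simple (w * π ω₀) i with hcase | hcase
    · have e : w * u = w * π ω₀ * s i := by rw [husplit, mul_assoc]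
      rw [e, hcase, ihu₀]
      omega
    · exfalso
      obtain ⟨ωw, hwred, hwπ⟩ := cs.exists_reduced_word' w
      have hwlen : ℓ (π ωw) = ωw.length := hwred
      have hconcat : π (ωw ++ ω₀) = w * π ω₀ := by
        rw [cs.wordProd_append, ← hwπ]
      have hinv : cs.IsRightInversion (π (ωw ++ ω₀)) (s i) := by
        refine ⟨cs.isReflection_simple i, ?_⟩
        rw [hconcat]
        have hne2 := cs.length_mul_simple_ne (w * π ω₀) i
        omega
      obtain ⟨j, hj, hdel⟩ := cs.rightExchange hinv
      rw [hconcat] at hdel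
      by_cases hjw : j < ωw.length
      · rw [List.eraseIdx_append_of_lt_length hjw, cs.wordProd_append] at hdel
        have hc : w * (π ω₀ * s i * (π ω₀)⁻¹) = π (ωw.eraseIdx j) := by
          have h1 : w * (π ω₀ * s i * (π ω₀)⁻¹) = (w * π ω₀ * s i) * (π ω₀)⁻¹ := by group
          rw [h1, hdel]
          group
        have hcmem : π ω₀ * s i * (π ω₀)⁻¹ ∈ Subgroup.closure L :=
          mul_mem (mul_mem hu0mem (Subgroup.subset_closure hsiL)) (inv_mem hu0mem)
        have hlenc : ℓ (w * (π ω₀ * s i * (π ω₀)⁻¹)) ≤ ωw.length - 1 := by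
          rw [hc]
          have h2 := List.length_eraseIdx_add_one hjw
          have h3 := cs.length_wordProd_le (ωw.eraseIdx j)
          omega
        have hmin' := hmin _ hcmem
        have hlw : ℓ w = ωw.length := by rw [hwπ]; exact hwlen
        omega
      · push_neg at hjw
        rw [List.eraseIdx_append_of_length_le hjw, cs.wordProd_append, ← hwπ] at hdel
        have hu' : π ω₀ * s i = π (ω₀.eraseIdx (j - ωw.length)) := by
          rw [mul_assoc] at hdel
          exact mul_left_cancel hdel
        have h1 : ℓ u ≤ (ω₀.eraseIdx (j - ωw.length)).length := by
          rw [husplit, hu']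
          exact cs.length_wordProd_le _
        have h2 : (ω₀.eraseIdx (j - ωw.length)).length ≤ ω₀.length :=
          (List.eraseIdx_sublist ω₀ (j - ωw.length)).length_le
        omega

private lemma df_additive {L : Set W} (hL : L ⊆ Set.range cs.simple) {w : W}
    (hdf : ∀ x ∈ L, ℓ w < ℓ (w * x)) :
    ∀ u ∈ Subgroup.closure L, ℓ (w * u) = ℓ w + ℓ u := by
  obtain ⟨u₀, hu₀mem, hu₀min⟩ : ∃ u₀ ∈ Subgroup.closure L,
      ∀ u ∈ Subgroup.closure L, ℓ (w * u₀) ≤ ℓ (w * u) := by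
    have h1 : (Set.range (fun u : Subgroup.closure L => ℓ (w * (u : W)))).Nonempty :=
      ⟨_, ⟨⟨1, Subgroup.one_mem _⟩, rfl⟩⟩
    obtain ⟨⟨u₀, hmem⟩, hval⟩ := Nat.sInf_mem h1
    have hval' : ℓ (w * u₀)
        = sInf (Set.range (fun u : Subgroup.closure L => ℓ (w * (u : W)))) := hval
    refine ⟨u₀, hmem, ?_⟩
    intro u hu
    rw [hval']
    exact Nat.sInf_le ⟨⟨u, hu⟩, rfl⟩
  have hmmin : ∀ x ∈ Subgroup.closure L, ℓ (w * u₀) ≤ ℓ ((w * u₀) * x) := by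
    intro x hx
    rw [mul_assoc]
    exact hu₀min _ (mul_mem hu₀mem hx)
  have hmadd := cs.min_additive hL hmmin
  rcases eq_or_ne u₀ 1 with rfl | hne
  · have hw : w * 1 = w := mul_one w
    rw [hw] at hmadd
    exact hmadd
  · exfalso
    have hc : u₀⁻¹ ∈ Subgroup.closure L := inv_mem hu₀mem
    obtain ⟨ω, hωL, hωred, hωπ⟩ := cs.exists_reduced_word_of_mem_closure hL hc
    have hωne : ω ≠ [] := by
      rintro rfl
      apply hne
      have : u₀⁻¹ = 1 := by rw [← hωπ]; simp
      simpa using this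
    obtain ⟨ω₀, i, rfl⟩ : ∃ ω₀ i, ω = ω₀ ++ [i] :=
      ⟨ω.dropLast, ω.getLast hωne, (List.dropLast_append_getLast hωne).symm⟩
    have hsiL : cs.simple i ∈ L := hωL i (List.mem_append_right _ (List.mem_singleton_self i))
    have hwm : w = (w * u₀) * u₀⁻¹ := by group
    have hsplit : u₀⁻¹ = π ω₀ * s i := by
      rw [← hωπ, cs.wordProd_append, cs.wordProd_singleton]
    have hws : w * s i = (w * u₀) * π ω₀ := by
      conv_lhs => rw [hwm, hsplit]
      have h0 : w * u₀ * (π ω₀ * s i) * s i = w * u₀ * π ω₀ * (s i * s i) := by group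
      rw [h0, cs.simple_mul_simple_self, mul_one]
    have hlω₀ : ℓ (π ω₀) = ω₀.length := by
      have h1 := hωred.take ω₀.length
      rwa [List.take_left] at h1
    have hlu₀inv : ℓ u₀ = ω₀.length + 1 := by
      rw [← cs.length_inv, ← hωπ]
      have h1 : ℓ (π (ω₀ ++ [i])) = (ω₀ ++ [i]).length := hωred
      simpa using h1
    have h1 : ℓ (w * s i) ≤ ℓ (w * u₀) + ω₀.length := by
      rw [hws]
      calc ℓ ((w * u₀) * π ω₀) ≤ ℓ (w * u₀) + ℓ (π ω₀) := cs.length_mul_le _ _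
        _ = ℓ (w * u₀) + ω₀.length := by rw [hlω₀]
    have h2 : ℓ w = ℓ (w * u₀) + (ω₀.length + 1) := by
      have h3 := hmadd u₀⁻¹ hc
      rw [← hwm] at h3
      rw [h3, cs.length_inv, hlu₀inv]
    have h4 := hdf _ hsiL
    omega

private lemma df_min {L : Set W} (hL : L ⊆ Set.range cs.simple) {w : W}
    (hdf : ∀ x ∈ L, ℓ w < ℓ (w * x)) :
    ∀ u ∈ Subgroup.closure L, ℓ w ≤ ℓ (w * u) := by
  intro u hu
  rw [cs.df_additive hL hdf u hu]
  omega

private lemma df_of_min {L : Set W} (hL : L ⊆ Set.range cs.simple) {w : W}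
    (hmin : ∀ u ∈ Subgroup.closure L, ℓ w ≤ ℓ (w * u)) :
    ∀ x ∈ L, ℓ w < ℓ (w * x) := by
  intro x hx
  obtain ⟨i, hi⟩ := hL hx
  have h1 := hmin x (Subgroup.subset_closure hx)
  have h2 := cs.length_mul_simple_ne w i
  rw [hi] at h2
  omega

private lemma df_unique {L : Set W} (hL : L ⊆ Set.range cs.simple) {w w' : W}
    (hdf : ∀ x ∈ L, ℓ w < ℓ (w * x)) (hdf' : ∀ x ∈ L, ℓ w' < ℓ (w' * x))
    (h : w⁻¹ * w' ∈ Subgroup.closure L) : w = w' := by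
  have h1 : ℓ (w * (w⁻¹ * w')) = ℓ w + ℓ (w⁻¹ * w') := cs.df_additive hL hdf _ h
  have h2 : ℓ (w' * (w'⁻¹ * w)) = ℓ w' + ℓ (w'⁻¹ * w) := by
    refine cs.df_additive hL hdf' _ ?_
    have : w'⁻¹ * w = (w⁻¹ * w')⁻¹ := by group
    rw [this]
    exact inv_mem h
  rw [show w * (w⁻¹ * w') = w' by group] at h1
  rw [show w' * (w'⁻¹ * w) = w by group] at h2
  have h3 : ℓ (w'⁻¹ * w) = ℓ (w⁻¹ * w') := by
    rw [show w'⁻¹ * w = (w⁻¹ * w')⁻¹ by group, cs.length_inv]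
  have h4 : ℓ (w⁻¹ * w') = 0 := by omega
  have h5 : w⁻¹ * w' = 1 := cs.length_eq_zero_iff.mp h4
  have h6 : w' = w * 1 := by rw [← h5]; group
  rw [h6, mul_one]

private lemma mem_of_length_one {L : Set W} (hL : L ⊆ Set.range cs.simple) {c : W}
    (hc : c ∈ Subgroup.closure L) (hlen : ℓ c = 1) : c ∈ L := by
  obtain ⟨ω, hωL, hωred, hωπ⟩ := cs.exists_reduced_word_of_mem_closure hL hc
  have h1 : ω.length = 1 := by
    have h2 : ℓ (π ω) = ω.length := hωred
    rw [hωπ, hlen] at h2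
    omega
  obtain ⟨a, rfl⟩ := List.length_eq_one_iff.mp h1
  rw [← hωπ, cs.wordProd_singleton]
  exact hωL a (List.mem_singleton_self a)

private lemma descent_exchange {L : Set W} (hL : L ⊆ Set.range cs.simple) {w y : W} {i : B}
    (hy : y ∈ Subgroup.closure L) (hadd : ℓ (w * y) = ℓ w + ℓ y)
    (hs : ℓ (s i * (w * y)) < ℓ (w * y)) (hsw : ℓ w < ℓ (s i * w)) :
    w⁻¹ * s i * w ∈ Subgroup.closure L := by
  obtain ⟨ω₂, hω₂L, hω₂red, hω₂π⟩ := cs.exists_reduced_word_of_mem_closure hL (inv_mem hy)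
  obtain ⟨ω₁, hω₁red, hω₁π⟩ := cs.exists_reduced_word' w⁻¹
  have hπ : π (ω₂ ++ ω₁) = y⁻¹ * w⁻¹ := by
    rw [cs.wordProd_append, hω₂π, ← hω₁π]
  have hlω₂ : ℓ (π ω₂) = ω₂.length := hω₂red
  have hlω₁ : ℓ (π ω₁) = ω₁.length := hω₁red
  have hlen1 : ℓ (y⁻¹ * w⁻¹) = ℓ w + ℓ y := by
    rw [show y⁻¹ * w⁻¹ = (w * y)⁻¹ by group, cs.length_inv, hadd]
  have hinv : cs.IsRightInversion (π (ω₂ ++ ω₁)) (s i) := by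
    refine ⟨cs.isReflection_simple i, ?_⟩
    rw [hπ]
    have e1 : ℓ (y⁻¹ * w⁻¹ * s i) = ℓ (s i * (w * y)) := by
      rw [← cs.length_inv]
      congr 1
      rw [mul_inv_rev, mul_inv_rev, cs.inv_simple, inv_inv, inv_inv]
    rw [e1, hlen1]
    omega
  obtain ⟨j, hj, hdel⟩ := cs.rightExchange hinv
  rw [hπ] at hdel
  by_cases hjc : j < ω₂.length
  · rw [List.eraseIdx_append_of_lt_length hjc, cs.wordProd_append, ← hω₁π] at hdel
    have hy'' : π (ω₂.eraseIdx j) ∈ Subgroup.closure L := by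
      apply cs.wordProd_mem_closure
      intro x hx
      exact hω₂L x ((List.eraseIdx_sublist ω₂ j).mem hx)
    have hkey : w⁻¹ * s i * w = y * π (ω₂.eraseIdx j) := by
      have h1 : y⁻¹ * w⁻¹ * s i = π (ω₂.eraseIdx j) * w⁻¹ := hdel
      have h2 := congrArg (fun x => y * x * w) h1
      calc w⁻¹ * s i * w = y * (y⁻¹ * w⁻¹ * s i) * w := by group
        _ = y * (π (ω₂.eraseIdx j) * w⁻¹) * w := by rw [h1]
        _ = y * π (ω₂.eraseIdx j) := by group
    rw [hkey]
    exact mul_mem hy hy''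
  · exfalso
    push_neg at hjc
    rw [List.eraseIdx_append_of_length_le hjc, cs.wordProd_append, hω₂π] at hdel
    have h1 : w⁻¹ * s i = π (ω₁.eraseIdx (j - ω₂.length)) := by
      have h2 : y⁻¹ * (w⁻¹ * s i) = y⁻¹ * π (ω₁.eraseIdx (j - ω₂.length)) := by
        rw [← mul_assoc]
        exact hdel
      exact mul_left_cancel h2
    have h3 : ℓ (w⁻¹ * s i) ≤ ω₁.length - 1 := by
      rw [h1]
      have h4 : j - ω₂.length < ω₁.length := by
        rw [List.length_append] at hj
        omega
      have h5 := List.length_eraseIdx_add_one h4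
      have h6 := cs.length_wordProd_le (ω₁.eraseIdx (j - ω₂.length))
      omega
    have h7 : ℓ (w⁻¹ * s i) = ℓ (s i * w) := by
      rw [← cs.length_inv]
      congr 1
      rw [mul_inv_rev, cs.inv_simple, inv_inv]
    have h8 : ℓ w = ω₁.length := by
      rw [← cs.length_inv, hω₁π, hlω₁]
    omega

private lemma self_inv_of_mem {L : Set W} (hL : L ⊆ Set.range cs.simple) {x : W} (hx : x ∈ L) :
    x⁻¹ = x := by
  obtain ⟨i, hi⟩ := hL hx
  rw [← hi, cs.inv_simple]

private lemma left_df_additive {L : Set W} (hL : L ⊆ Set.range cs.simple) {w : W}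
    (hdf : ∀ x ∈ L, ℓ w < ℓ (x * w)) :
    ∀ u ∈ Subgroup.closure L, ℓ (u * w) = ℓ u + ℓ w := by
  have hdf' : ∀ x ∈ L, ℓ (w⁻¹) < ℓ (w⁻¹ * x) := by
    intro x hx
    have h1 : ℓ (w⁻¹ * x) = ℓ (x * w) := by
      rw [← cs.length_inv]
      congr 1
      rw [mul_inv_rev, inv_inv, cs.self_inv_of_mem hL hx]
    rw [h1, cs.length_inv]
    exact hdf x hx
  intro u hu
  have h2 := cs.df_additive hL hdf' u⁻¹ (inv_mem hu)
  have h3 : ℓ (w⁻¹ * u⁻¹) = ℓ (u * w) := by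
    rw [show w⁻¹ * u⁻¹ = (u * w)⁻¹ by group, cs.length_inv]
  rw [h3, cs.length_inv, cs.length_inv] at h2
  omega

private lemma left_df_min {L : Set W} (hL : L ⊆ Set.range cs.simple) {w : W}
    (hdf : ∀ x ∈ L, ℓ w < ℓ (x * w)) :
    ∀ u ∈ Subgroup.closure L, ℓ w ≤ ℓ (u * w) := by
  intro u hu
  rw [cs.left_df_additive hL hdf u hu]
  omega

private lemma conj_mem_closure_of_forall {K L : Set W} {w : W}
    (hK : ∀ x ∈ K, w⁻¹ * x * w ∈ Subgroup.closure L) :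
    ∀ u ∈ Subgroup.closure K, w⁻¹ * u * w ∈ Subgroup.closure L := by
  intro u hu
  induction hu using Subgroup.closure_induction with
  | mem x hx => exact hK x hx
  | one => simpa using Subgroup.one_mem _
  | mul x y _ _ hx hy =>
    have h1 : w⁻¹ * (x * y) * w = (w⁻¹ * x * w) * (w⁻¹ * y * w) := by group
    rw [h1]
    exact mul_mem hx hy
  | inv x _ hx =>
    have h1 : w⁻¹ * x⁻¹ * w = (w⁻¹ * x * w)⁻¹ := by group
    rw [h1]
    exact inv_mem hx

end CoxeterSystem

/-- A Bédard-admissible sequence `t n = (J_n, w_n)`, where `J_n` is a set of simple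
reflections of `W` and `w_n ∈ W`: `J_0 = J`; `J_n = J_{n-1} ∩ w_{n-1} δ(J_{n-1}) w_{n-1}⁻¹`;
`w_n` is of minimal length in `W_{J_n} w_n` and in `w_n W_{δ(J_n)}`; and
`w_n ∈ W_{J_n} w_{n-1} W_{δ(J_{n-1})}`. Standard parabolic subgroups are realized as
subgroup closures of sets of simple reflections. -/
def BedardAdmissible {B W : Type*} [Group W] {M : CoxeterMatrix B}
    (cs : CoxeterSystem M W) (δ : W ≃* W) (J : Set W) (t : ℕ → Set W × W) : Prop :=
  (t 0).1 = J ∧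
  (∀ n : ℕ, 1 ≤ n → (t n).1 =
    (t (n - 1)).1 ∩ (fun x => (t (n - 1)).2 * x * ((t (n - 1)).2)⁻¹) '' ((⇑δ) '' (t (n - 1)).1)) ∧
  (∀ n : ℕ, ∀ u ∈ Subgroup.closure (t n).1, cs.length (t n).2 ≤ cs.length (u * (t n).2)) ∧
  (∀ n : ℕ, ∀ u ∈ Subgroup.closure ((⇑δ) '' (t n).1), cs.length (t n).2 ≤ cs.length ((t n).2 * u)) ∧
  (∀ n : ℕ, 1 ≤ n → ∃ x ∈ Subgroup.closure (t n).1, ∃ y ∈ Subgroup.closure ((⇑δ) '' (t (n - 1)).1),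
    (t n).2 = x * (t (n - 1)).2 * y)

namespace CoxeterSystem

open List

variable {B : Type*} {W : Type*} [Group W] {M : CoxeterMatrix B} (cs : CoxeterSystem M W)

local prefix:100 "s" => cs.simple
local prefix:100 "π" => cs.wordProd
local prefix:100 "ℓ" => cs.length

variable {δ : W ≃* W} {J : Set W} {t : ℕ → Set W × W}

private lemma bedard_F1 (hadm : BedardAdmissible cs δ J t) (n : ℕ) :
    (t (n+1)).1 = (t n).1 ∩ (fun x => (t n).2 * x * ((t n).2)⁻¹) '' ((⇑δ) '' (t n).1) := by
  have h := hadm.2.1 (n+1) (by omega)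
  simpa using h

private lemma bedard_F2 (hadm : BedardAdmissible cs δ J t) (n : ℕ) :
    (t (n+1)).1 ⊆ (t n).1 := by
  rw [bedard_F1 cs hadm n]
  exact Set.inter_subset_left

private lemma bedard_Ksub (hadm : BedardAdmissible cs δ J t) (n : ℕ) : (t n).1 ⊆ J := by
  induction n with
  | zero => rw [hadm.1]
  | succ n ih => exact (bedard_F2 cs hadm n).trans ih

private lemma bedard_Limg (hδ : (⇑δ) '' Set.range cs.simple = Set.range cs.simple)
    (hJ : J ⊆ Set.range cs.simple) (hadm : BedardAdmissible cs δ J t) (n : ℕ) :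
    (⇑δ) '' (t n).1 ⊆ Set.range cs.simple := by
  have h1 : (⇑δ) '' (t n).1 ⊆ (⇑δ) '' Set.range cs.simple :=
    Set.image_mono ((bedard_Ksub cs hadm n).trans hJ)
  rwa [hδ] at h1

private lemma bedard_F4 (hadm : BedardAdmissible cs δ J t) (n : ℕ) :
    ((t n).2)⁻¹ * (t (n+1)).2 ∈ Subgroup.closure ((⇑δ) '' (t n).1) := by
  obtain ⟨x, hx, y, hy, hxy⟩ := hadm.2.2.2.2 (n+1) (by omega)
  rw [Nat.add_sub_cancel] at hy hxy
  have hconj : ((t n).2)⁻¹ * x * (t n).2 ∈ Subgroup.closure ((⇑δ) '' (t n).1) := by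
    refine conj_mem_closure_of_forall ?_ x hx
    intro z hz
    have h1 : z ∈ (t n).1 ∩ (fun a => (t n).2 * a * ((t n).2)⁻¹) '' ((⇑δ) '' (t n).1) := by
      rw [← bedard_F1 cs hadm n]
      exact hz
    obtain ⟨x₀, hx₀, hx₀e⟩ := h1.2
    have h2 : ((t n).2)⁻¹ * z * (t n).2 = x₀ := by
      rw [← hx₀e]
      show ((t n).2)⁻¹ * ((t n).2 * x₀ * ((t n).2)⁻¹) * (t n).2 = x₀
      group
    rw [h2]
    exact Subgroup.subset_closure hx₀
  have hxy' : ((t n).2)⁻¹ * (t (n+1)).2 = (((t n).2)⁻¹ * x * (t n).2) * y := by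
    rw [hxy]; group
  rw [hxy']
  exact mul_mem hconj hy

private lemma bedard_mono (hadm : BedardAdmissible cs δ J t) {n m : ℕ} (h : n ≤ m) :
    (t m).1 ⊆ (t n).1 := by
  induction m, h using Nat.le_induction with
  | base => exact subset_rfl
  | succ m hm ih => exact (bedard_F2 cs hadm m).trans ih

private lemma bedard_F5 (hadm : BedardAdmissible cs δ J t) (n : ℕ) :
    ∀ m, n ≤ m → ((t n).2)⁻¹ * (t m).2 ∈ Subgroup.closure ((⇑δ) '' (t n).1) := by
  intro m hm
  induction m, hm using Nat.le_induction with
  | base => simpa using Subgroup.one_mem _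
  | succ m hm ih =>
    have h1 := bedard_F4 cs hadm m
    have h2 : Subgroup.closure ((⇑δ) '' (t m).1) ≤ Subgroup.closure ((⇑δ) '' (t n).1) :=
      Subgroup.closure_mono (Set.image_mono (bedard_mono cs hadm hm))
    have h3 : ((t n).2)⁻¹ * (t (m+1)).2
        = (((t n).2)⁻¹ * (t m).2) * (((t m).2)⁻¹ * (t (m+1)).2) := by group
    rw [h3]
    exact mul_mem ih (h2 h1)

private lemma bedard_step_const (hδ : (⇑δ) '' Set.range cs.simple = Set.range cs.simple)
    (hJ : J ⊆ Set.range cs.simple) (hadm : BedardAdmissible cs δ J t) {n : ℕ}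
    (h : (t (n+1)).1 = (t n).1) : t (n+1) = t n := by
  have hLs : (⇑δ) '' (t n).1 ⊆ Set.range cs.simple := bedard_Limg cs hδ hJ hadm n
  have hz := bedard_F4 cs hadm n
  have hw' := hadm.2.2.2.1 (n+1)
  rw [h] at hw'
  have hdf1 := cs.df_of_min hLs (hadm.2.2.2.1 n)
  have hdf2 := cs.df_of_min hLs hw'
  exact Prod.ext h (cs.df_unique hLs hdf1 hdf2 hz).symm

private lemma bedard_const_from (hδ : (⇑δ) '' Set.range cs.simple = Set.range cs.simple)
    (hJ : J ⊆ Set.range cs.simple) (hadm : BedardAdmissible cs δ J t) {k : ℕ}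
    (hk : t (k+1) = t k) : ∀ n, k ≤ n → t (n+1) = t n := by
  intro n hn
  induction n, hn using Nat.le_induction with
  | base => exact hk
  | succ m hm ih =>
    have hJeq : (t (m+1+1)).1 = (t (m+1)).1 := by
      rw [bedard_F1 cs hadm (m+1), ih, ← bedard_F1 cs hadm m]
      exact congrArg Prod.fst ih
    exact bedard_step_const cs hδ hJ hadm hJeq

private lemma bedard_parta [Fintype B]
    (hδ : (⇑δ) '' Set.range cs.simple = Set.range cs.simple)
    (hJ : J ⊆ Set.range cs.simple) (hadm : BedardAdmissible cs δ J t) :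
    ∀ n, Fintype.card B ≤ n → t (n+1) = t n := by
  have hfin : ∀ n, ((t n).1).Finite :=
    fun n => (Set.finite_range cs.simple).subset ((bedard_Ksub cs hadm n).trans hJ)
  have hcard : ∀ k, (∀ j, j < k → t (j+1) ≠ t j) → ((t k).1).ncard + k ≤ Fintype.card B := by
    intro k
    induction k with
    | zero =>
      intro _
      have h0 : (t 0).1 ⊆ Set.range cs.simple := (bedard_Ksub cs hadm 0).trans hJ
      have h1 : ((t 0).1).ncard ≤ (Set.range cs.simple).ncard :=
        Set.ncard_le_ncard h0 (Set.finite_range _)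
      have h2 : (Set.range cs.simple).ncard ≤ Fintype.card B := by
        rw [← Set.image_univ]
        calc (cs.simple '' Set.univ).ncard ≤ Set.univ.ncard := Set.ncard_image_le Set.finite_univ
          _ = Fintype.card B := by rw [Set.ncard_univ, Nat.card_eq_fintype_card]
      omega
    | succ k ih =>
      intro hne
      have ih' := ih (fun j hj => hne j (by omega))
      have hssub : (t (k+1)).1 ⊂ (t k).1 := by
        refine (bedard_F2 cs hadm k).ssubset_of_ne ?_
        intro heq
        exact hne k (by omega) (bedard_step_const cs hδ hJ hadm heq)
      have hlt : ((t (k+1)).1).ncard < ((t k).1).ncard := Set.ncard_lt_ncard hssub (hfin k)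
      omega
  intro n hn
  by_cases hex : ∃ j, j ≤ Fintype.card B ∧ t (j+1) = t j
  · obtain ⟨j, hj, hconst⟩ := hex
    exact bedard_const_from cs hδ hJ hadm hconst n (le_trans hj hn)
  · exfalso
    push_neg at hex
    have := hcard (Fintype.card B + 1) (fun j hj => hex j (by omega))
    omega

private lemma bedard_P (hδ : (⇑δ) '' Set.range cs.simple = Set.range cs.simple)
    (hJ : J ⊆ Set.range cs.simple) (hadm : BedardAdmissible cs δ J t) :
    ∀ n, (∀ x ∈ J, ℓ (t n).2 < ℓ (x * (t n).2)) ∧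
      (∀ x ∈ J, x ∉ (t n).1 →
        ((t n).2)⁻¹ * x * (t n).2 ∉ Subgroup.closure ((⇑δ) '' (t n).1)) := by
  intro n
  induction n with
  | zero =>
    constructor
    · intro x hx
      obtain ⟨i, hi⟩ := hJ hx
      have h1 := hadm.2.2.1 0 x (by rw [hadm.1]; exact Subgroup.subset_closure hx)
      have h2 := cs.length_simple_mul_ne (t 0).2 i
      rw [hi] at h2
      omega
    · intro x hx hnx
      rw [hadm.1] at hnx
      exact absurd hx hnx
  | succ n Pn =>
    have hLs : (⇑δ) '' (t n).1 ⊆ Set.range cs.simple := bedard_Limg cs hδ hJ hadm n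
    have hy' := bedard_F4 cs hadm n
    have hw' : (t (n+1)).2 = (t n).2 * (((t n).2)⁻¹ * (t (n+1)).2) := by group
    have hadd : ℓ ((t n).2 * (((t n).2)⁻¹ * (t (n+1)).2))
        = ℓ (t n).2 + ℓ (((t n).2)⁻¹ * (t (n+1)).2) :=
      cs.min_additive hLs (hadm.2.2.2.1 n) _ hy'
    have hcore : ∀ x ∈ J, x ∈ (t n).1 →
        ((t n).2)⁻¹ * x * (t n).2 ∈ Subgroup.closure ((⇑δ) '' (t n).1) → x ∈ (t (n+1)).1 := by
      intro x hxJ hxK hxc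
      have hlsw : ℓ (x * (t n).2) = ℓ (t n).2 + 1 := by
        obtain ⟨i, hi⟩ := hJ hxJ
        have h1 := Pn.1 x hxJ
        have h2 := cs.length_simple_mul (t n).2 i
        rw [hi] at h2
        rcases h2 with h2 | h2 <;> omega
      have hwc : (t n).2 * (((t n).2)⁻¹ * x * (t n).2) = x * (t n).2 := by group
      have h3 : ℓ ((t n).2 * (((t n).2)⁻¹ * x * (t n).2))
          = ℓ (t n).2 + ℓ (((t n).2)⁻¹ * x * (t n).2) :=
        cs.min_additive hLs (hadm.2.2.2.1 n) _ hxc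
      rw [hwc] at h3
      have h4 : ℓ (((t n).2)⁻¹ * x * (t n).2) = 1 := by omega
      have h5 : ((t n).2)⁻¹ * x * (t n).2 ∈ (⇑δ) '' (t n).1 :=
        cs.mem_of_length_one hLs hxc h4
      rw [bedard_F1 cs hadm n]
      refine ⟨hxK, ⟨((t n).2)⁻¹ * x * (t n).2, h5, ?_⟩⟩
      show (t n).2 * (((t n).2)⁻¹ * x * (t n).2) * ((t n).2)⁻¹ = x
      group
    constructor
    · intro x hxJ
      by_contra hcon
      push_neg at hcon
      obtain ⟨i, hi⟩ := hJ hxJ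
      have hne := cs.length_simple_mul_ne (t (n+1)).2 i
      rw [hi] at hne
      have hlt : ℓ (x * (t (n+1)).2) < ℓ (t (n+1)).2 := by omega
      have hsx : ℓ (s i * ((t n).2 * (((t n).2)⁻¹ * (t (n+1)).2)))
          < ℓ ((t n).2 * (((t n).2)⁻¹ * (t (n+1)).2)) := by
        rw [← hw', hi]
        exact hlt
      have hswx : ℓ (t n).2 < ℓ (s i * (t n).2) := by
        rw [hi]; exact Pn.1 x hxJ
      have hmem := cs.descent_exchange hLs hy' hadd hsx hswx
      rw [hi] at hmem
      by_cases hxK : x ∈ (t n).1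
      · have hx1 := hcore x hxJ hxK hmem
        have h6 := hadm.2.2.1 (n+1) x (Subgroup.subset_closure hx1)
        omega
      · exact Pn.2 x hxJ hxK hmem
    · intro x hxJ hnx1 hcon
      have hmono : Subgroup.closure ((⇑δ) '' (t (n+1)).1)
          ≤ Subgroup.closure ((⇑δ) '' (t n).1) :=
        Subgroup.closure_mono (Set.image_mono (bedard_F2 cs hadm n))
      have hc2 : ((t n).2)⁻¹ * x * (t n).2 ∈ Subgroup.closure ((⇑δ) '' (t n).1) := by
        have he : ((t n).2)⁻¹ * x * (t n).2
            = (((t n).2)⁻¹ * (t (n+1)).2) * (((t (n+1)).2)⁻¹ * x * (t (n+1)).2)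
              * (((t n).2)⁻¹ * (t (n+1)).2)⁻¹ := by group
        rw [he]
        exact mul_mem (mul_mem hy' (hmono hcon)) (inv_mem hy')
      by_cases hxK : x ∈ (t n).1
      · exact hnx1 (hcore x hxJ hxK hc2)
      · exact Pn.2 x hxJ hxK hc2

private lemma exists_df_rep {L : Set W} (hL : L ⊆ Set.range cs.simple) (v : W) :
    ∃ m : W, m⁻¹ * v ∈ Subgroup.closure L ∧ ∀ x ∈ L, ℓ m < ℓ (m * x) := by
  obtain ⟨u₀, hu₀mem, hu₀min⟩ : ∃ u₀ ∈ Subgroup.closure L,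
      ∀ u ∈ Subgroup.closure L, ℓ (v * u₀) ≤ ℓ (v * u) := by
    have h1 : (Set.range (fun u : Subgroup.closure L => ℓ (v * (u : W)))).Nonempty :=
      ⟨_, ⟨⟨1, Subgroup.one_mem _⟩, rfl⟩⟩
    obtain ⟨⟨u₀, hmem⟩, hval⟩ := Nat.sInf_mem h1
    have hval' : ℓ (v * u₀)
        = sInf (Set.range (fun u : Subgroup.closure L => ℓ (v * (u : W)))) := hval
    refine ⟨u₀, hmem, ?_⟩
    intro u hu
    rw [hval']
    exact Nat.sInf_le ⟨⟨u, hu⟩, rfl⟩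
  refine ⟨v * u₀, ?_, ?_⟩
  · have h2 : (v * u₀)⁻¹ * v = u₀⁻¹ := by group
    rw [h2]
    exact inv_mem hu₀mem
  · apply cs.df_of_min hL
    intro x hx
    rw [mul_assoc]
    exact hu₀min _ (mul_mem hu₀mem hx)

end CoxeterSystem



/-- Bédard's theorem (4.2(a),(b)): every admissible sequence is eventually constant from
`|S|` on, and `t ↦ w_∞` is a bijection from the set of admissible sequences onto
`ᴶW = {w : l(sw) > l(w) for all s ∈ J}`. -/
theorem bedard_bijection
    {B W : Type*} [Group W] [Fintype B] {M : CoxeterMatrix B} (cs : CoxeterSystem M W)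
    (δ : W ≃* W) (hδ : (⇑δ) '' Set.range cs.simple = Set.range cs.simple)
    (J : Set W) (hJ : J ⊆ Set.range cs.simple) :
    (∀ t : ℕ → Set W × W, BedardAdmissible cs δ J t →
      ∀ n : ℕ, Fintype.card B ≤ n → t (n + 1) = t n) ∧
    Set.BijOn (fun t : ℕ → Set W × W => (t (Fintype.card B)).2)
      {t | BedardAdmissible cs δ J t}
      {w : W | ∀ s ∈ J, cs.length w < cs.length (s * w)} := by
  constructor
  · intro t hadm n hn
    exact CoxeterSystem.bedard_parta cs hδ hJ hadm n hn
  refine ⟨?_, ?_, ?_⟩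
  · -- MapsTo
    intro t ht
    intro x hx
    exact (CoxeterSystem.bedard_P cs hδ hJ ht (Fintype.card B)).1 x hx
  · -- InjOn
    intro t ht t' ht' heq
    have heq' : (t (Fintype.card B)).2 = (t' (Fintype.card B)).2 := heq
    have hC1 : ∀ (u : ℕ → Set W × W), BedardAdmissible cs δ J u → ∀ n,
        ((u n).2)⁻¹ * (u (Fintype.card B)).2 ∈ Subgroup.closure ((⇑δ) '' (u n).1) := by
      intro u hu n
      rcases le_or_gt n (Fintype.card B) with h | h
      · exact CoxeterSystem.bedard_F5 cs hu n (Fintype.card B) h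
      · have hconst : ∀ m, Fintype.card B ≤ m → u m = u (Fintype.card B) := by
          intro m hm
          induction m, hm using Nat.le_induction with
          | base => rfl
          | succ m hm ih => rw [CoxeterSystem.bedard_parta cs hδ hJ hu m hm, ih]
        rw [hconst n (by omega)]
        simpa using Subgroup.one_mem _
    have hsame : ∀ n, (t n).1 = (t' n).1 → (t n).2 = (t' n).2 := by
      intro n hKeq
      have hLs := CoxeterSystem.bedard_Limg cs hδ hJ ht n
      have hdf1 := cs.df_of_min hLs (ht.2.2.2.1 n)
      have hdf2' := ht'.2.2.2.1 n
      rw [← hKeq] at hdf2'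
      have hdf2 := cs.df_of_min hLs hdf2'
      apply cs.df_unique hLs hdf1 hdf2
      have h1 := hC1 t ht n
      have h2 := hC1 t' ht' n
      rw [← hKeq] at h2
      have he : ((t n).2)⁻¹ * (t' n).2
          = (((t n).2)⁻¹ * (t (Fintype.card B)).2)
            * (((t' n).2)⁻¹ * (t' (Fintype.card B)).2)⁻¹ := by
        rw [heq']
        group
      rw [he]
      exact mul_mem h1 (inv_mem h2)
    have key : ∀ n, t n = t' n := by
      intro n
      induction n with
      | zero =>
        have hJ0 : (t 0).1 = (t' 0).1 := by rw [ht.1, ht'.1]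
        exact Prod.ext hJ0 (hsame 0 hJ0)
      | succ n ihn =>
        have hK : (t (n+1)).1 = (t' (n+1)).1 := by
          rw [CoxeterSystem.bedard_F1 cs ht n, CoxeterSystem.bedard_F1 cs ht' n, ihn]
        exact Prod.ext hK (hsame (n+1) hK)
    exact funext key
  · -- SurjOn
    intro v hv
    simp only [Set.mem_setOf_eq] at hv
    classical
    have hrep : ∀ K : Set W, ∃ m : W, ((⇑δ) '' K ⊆ Set.range cs.simple) →
        (m⁻¹ * v ∈ Subgroup.closure ((⇑δ) '' K) ∧
          ∀ x ∈ (⇑δ) '' K, cs.length m < cs.length (m * x)) := by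
      intro K
      by_cases h : (⇑δ) '' K ⊆ Set.range cs.simple
      · obtain ⟨m, hm1, hm2⟩ := cs.exists_df_rep h v
        exact ⟨m, fun _ => ⟨hm1, hm2⟩⟩
      · exact ⟨1, fun hh => absurd hh h⟩
    choose F hF using hrep
    obtain ⟨t₀, hrec0, hrecs⟩ : ∃ t₀ : ℕ → Set W × W, t₀ 0 = (J, F J) ∧
        ∀ n, t₀ (n+1) = ((t₀ n).1 ∩ (fun x => (t₀ n).2 * x * ((t₀ n).2)⁻¹) '' ((⇑δ) '' (t₀ n).1),
          F ((t₀ n).1 ∩ (fun x => (t₀ n).2 * x * ((t₀ n).2)⁻¹) '' ((⇑δ) '' (t₀ n).1))) :=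
      ⟨fun n => Nat.rec ((J : Set W), F J) (fun _ p =>
          (p.1 ∩ (fun x => p.2 * x * p.2⁻¹) '' ((⇑δ) '' p.1),
           F (p.1 ∩ (fun x => p.2 * x * p.2⁻¹) '' ((⇑δ) '' p.1)))) n, rfl, fun n => rfl⟩
    have hK0 : (t₀ 0).1 = J := by rw [hrec0]
    have hKJ : ∀ n, (t₀ n).1 ⊆ J := by
      intro n
      induction n with
      | zero => exact hK0.le
      | succ n ihn =>
        rw [hrecs n]
        exact Set.inter_subset_left.trans ihn
    have hsnd : ∀ n, (t₀ n).2 = F ((t₀ n).1) := by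
      intro n
      cases n with
      | zero => rw [hrec0]
      | succ n => rw [hrecs n]
    have hδK : ∀ n, (⇑δ) '' (t₀ n).1 ⊆ Set.range cs.simple := by
      intro n
      have h1 : (⇑δ) '' (t₀ n).1 ⊆ (⇑δ) '' Set.range cs.simple :=
        Set.image_mono ((hKJ n).trans hJ)
      rwa [hδ] at h1
    have hcoset : ∀ n, ((t₀ n).2)⁻¹ * v ∈ Subgroup.closure ((⇑δ) '' (t₀ n).1) := by
      intro n
      rw [hsnd n]
      exact (hF _ (hδK n)).1
    have hdfr : ∀ n, ∀ x ∈ (⇑δ) '' (t₀ n).1,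
        cs.length (t₀ n).2 < cs.length ((t₀ n).2 * x) := by
      intro n
      rw [hsnd n]
      exact (hF _ (hδK n)).2
    have haddv : ∀ n, cs.length v = cs.length (t₀ n).2 + cs.length (((t₀ n).2)⁻¹ * v) := by
      intro n
      have h1 := cs.df_additive (hδK n) (hdfr n) _ (hcoset n)
      rw [show (t₀ n).2 * (((t₀ n).2)⁻¹ * v) = v by group] at h1
      exact h1
    have hadm₀ : BedardAdmissible cs δ J t₀ := by
      refine ⟨hK0, ?_, ?_, ?_, ?_⟩
      · intro n hn
        obtain ⟨k, rfl⟩ : ∃ k, n = k + 1 := ⟨n - 1, by omega⟩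
        rw [Nat.add_sub_cancel, hrecs k]
      · intro n u hu
        have hdfl : ∀ x ∈ (t₀ n).1, cs.length (t₀ n).2 < cs.length (x * (t₀ n).2) := by
          intro x hx
          obtain ⟨i, hi⟩ := hJ (hKJ n hx)
          by_contra hcon
          push_neg at hcon
          have hne := cs.length_simple_mul_ne (t₀ n).2 i
          rw [hi] at hne
          have hlt : cs.length (x * (t₀ n).2) < cs.length (t₀ n).2 := by omega
          have h2 : cs.length (x * v)
              ≤ cs.length (x * (t₀ n).2) + cs.length (((t₀ n).2)⁻¹ * v) := by
            calc cs.length (x * v)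
                = cs.length ((x * (t₀ n).2) * (((t₀ n).2)⁻¹ * v)) := by congr 1; group
              _ ≤ _ := cs.length_mul_le _ _
          have h3 := hv x (hKJ n hx)
          have h4 := haddv n
          omega
        exact cs.left_df_min ((hKJ n).trans hJ) hdfl u hu
      · intro n
        exact cs.df_min (hδK n) (hdfr n)
      · intro n hn
        obtain ⟨k, rfl⟩ : ∃ k, n = k + 1 := ⟨n - 1, by omega⟩
        rw [Nat.add_sub_cancel]
        refine ⟨1, Subgroup.one_mem _,
          (((t₀ k).2)⁻¹ * v) * ((((t₀ (k+1)).2)⁻¹ * v))⁻¹, ?_, ?_⟩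
        · refine mul_mem (hcoset k) (inv_mem ?_)
          have hmono : Subgroup.closure ((⇑δ) '' (t₀ (k+1)).1)
              ≤ Subgroup.closure ((⇑δ) '' (t₀ k).1) := by
            apply Subgroup.closure_mono
            apply Set.image_mono
            rw [hrecs k]
            exact Set.inter_subset_left
          exact hmono (hcoset (k+1))
        · group
    refine ⟨t₀, hadm₀, ?_⟩
    show (t₀ (Fintype.card B)).2 = v
    have hstab : t₀ (Fintype.card B + 1) = t₀ (Fintype.card B) :=
      CoxeterSystem.bedard_parta cs hδ hJ hadm₀ _ le_rfl
    have h1 := hrecs (Fintype.card B)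
    rw [hstab] at h1
    have h1' : (t₀ (Fintype.card B)).1 = (t₀ (Fintype.card B)).1
        ∩ (fun x => (t₀ (Fintype.card B)).2 * x * ((t₀ (Fintype.card B)).2)⁻¹)
          '' ((⇑δ) '' (t₀ (Fintype.card B)).1) := congrArg Prod.fst h1
    have hKsub : (t₀ (Fintype.card B)).1
        ⊆ (fun x => (t₀ (Fintype.card B)).2 * x * ((t₀ (Fintype.card B)).2)⁻¹)
          '' ((⇑δ) '' (t₀ (Fintype.card B)).1) := by
      intro x hx
      have hx2 : x ∈ (t₀ (Fintype.card B)).1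
          ∩ (fun x => (t₀ (Fintype.card B)).2 * x * ((t₀ (Fintype.card B)).2)⁻¹)
            '' ((⇑δ) '' (t₀ (Fintype.card B)).1) := by
        rw [← h1']
        exact hx
      exact hx2.2
    have hc := hcoset (Fintype.card B)
    have himg : (fun x => ((t₀ (Fintype.card B)).2)⁻¹ * x * (t₀ (Fintype.card B)).2)
        '' (t₀ (Fintype.card B)).1 ⊆ (⇑δ) '' (t₀ (Fintype.card B)).1 := by
      rintro y ⟨x, hx, rfl⟩
      show ((t₀ (Fintype.card B)).2)⁻¹ * x * (t₀ (Fintype.card B)).2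
        ∈ (⇑δ) '' (t₀ (Fintype.card B)).1
      obtain ⟨x₀, hx₀, hx₀e⟩ := hKsub hx
      have h2 : ((t₀ (Fintype.card B)).2)⁻¹ * x * (t₀ (Fintype.card B)).2 = x₀ := by
        rw [← hx₀e]
        show ((t₀ (Fintype.card B)).2)⁻¹
          * ((t₀ (Fintype.card B)).2 * x₀ * ((t₀ (Fintype.card B)).2)⁻¹)
          * (t₀ (Fintype.card B)).2 = x₀
        group
      rw [h2]
      exact hx₀
    have hKfin : (((⇑δ) '' (t₀ (Fintype.card B)).1)).Finite :=
      (Set.finite_range cs.simple).subset (hδK (Fintype.card B))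
    have himg_eq : (fun x => ((t₀ (Fintype.card B)).2)⁻¹ * x * (t₀ (Fintype.card B)).2)
        '' (t₀ (Fintype.card B)).1 = (⇑δ) '' (t₀ (Fintype.card B)).1 := by
      apply Set.eq_of_subset_of_ncard_le himg ?_ hKfin
      have hinj1 : Function.Injective
          (fun x : W => ((t₀ (Fintype.card B)).2)⁻¹ * x * (t₀ (Fintype.card B)).2) := by
        intro a b hab
        simp only at hab
        exact mul_left_cancel (mul_right_cancel hab)
      rw [Set.ncard_image_of_injective _ hinj1,
        Set.ncard_image_of_injective _ (MulEquiv.injective δ)]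
    by_cases hc1 : ((t₀ (Fintype.card B)).2)⁻¹ * v = 1
    · exact inv_mul_eq_one.mp hc1
    · exfalso
      obtain ⟨ω, hωL, hωred, hωπ⟩ :=
        cs.exists_reduced_word_of_mem_closure (hδK (Fintype.card B)) hc
      cases ω with
      | nil => exact hc1 (by rw [← hωπ]; simp)
      | cons i ωt =>
        have hsiL : cs.simple i ∈ (⇑δ) '' (t₀ (Fintype.card B)).1 :=
          hωL i (List.mem_cons_self (a := i) (l := ωt))
        have htail : cs.IsReduced ωt := hωred.drop 1
        have hlc : cs.length (((t₀ (Fintype.card B)).2)⁻¹ * v) = ωt.length + 1 := by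
          have h2 : cs.length (cs.wordProd (i :: ωt)) = (i :: ωt).length := hωred
          rw [hωπ] at h2
          simpa using h2
        have hltail : cs.length (cs.wordProd ωt) = ωt.length := htail
        have hsplitc : ((t₀ (Fintype.card B)).2)⁻¹ * v = cs.simple i * cs.wordProd ωt := by
          rw [← hωπ, cs.wordProd_cons]
        have hsi2 : cs.simple i
            ∈ (fun x => ((t₀ (Fintype.card B)).2)⁻¹ * x * (t₀ (Fintype.card B)).2)
              '' (t₀ (Fintype.card B)).1 := by
          rw [himg_eq]
          exact hsiL
        obtain ⟨s₀, hs₀K, hs₀e⟩ := hsi2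
        have hs₀e' : ((t₀ (Fintype.card B)).2)⁻¹ * s₀ * (t₀ (Fintype.card B)).2
            = cs.simple i := hs₀e
        have hs₀v : s₀ * v = (t₀ (Fintype.card B)).2 * cs.wordProd ωt := by
          have h3 : s₀ = (t₀ (Fintype.card B)).2 * cs.simple i
              * ((t₀ (Fintype.card B)).2)⁻¹ := by
            rw [← hs₀e']
            group
          have h4 : v = (t₀ (Fintype.card B)).2 * (((t₀ (Fintype.card B)).2)⁻¹ * v) := by
            group
          rw [h3]
          conv_lhs => rw [h4]
          rw [hsplitc]
          calc (t₀ (Fintype.card B)).2 * cs.simple i * ((t₀ (Fintype.card B)).2)⁻¹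
              * ((t₀ (Fintype.card B)).2 * (cs.simple i * cs.wordProd ωt))
              = (t₀ (Fintype.card B)).2 * (cs.simple i * cs.simple i) * cs.wordProd ωt := by
                group
            _ = (t₀ (Fintype.card B)).2 * cs.wordProd ωt := by
                rw [cs.simple_mul_simple_self, mul_one]
        have h5 : cs.length (s₀ * v) ≤ cs.length (t₀ (Fintype.card B)).2 + ωt.length := by
          rw [hs₀v]
          calc cs.length ((t₀ (Fintype.card B)).2 * cs.wordProd ωt)
              ≤ cs.length (t₀ (Fintype.card B)).2 + cs.length (cs.wordProd ωt) :=
                cs.length_mul_le _ _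
            _ = cs.length (t₀ (Fintype.card B)).2 + ωt.length := by rw [hltail]
        have h6 := hv s₀ (hKJ (Fintype.card B) hs₀K)
        have h7 := haddv (Fintype.card B)
        omega
end
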